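/- arXiv:2304.00945 — 3 statements merged into one kernel-verified Lean document; each statement's English description precedes it below -/
import Mathlib

section
/- Let G be a 3-connected graph and P a vertex-transitive finite connected graph. If G := P is 3-connected and has a totally-nested nontrivial tri-separation, then G has a totally-nested nontrivial tri-separation whose separator consists of three edges and one of whose sides induces a triangle (K3). (Consequently every vertex of G has degree three.) -/
namespace Paper

open SimpleGraph

variable {V : Type*} [Fintype V] [DecidableEq V]

/-- A graph is `k`-connected if it has more than `k` vertices and deleting
fewer than `k` vertices never disconnects it. -/
def KConnected {W : Type*} (k : ℕ) (H : SimpleGraph W) : Prop :=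
  k < Nat.card W ∧ ∀ S : Set W, S.ncard < k → (H.induce Sᶜ).Connected

/-- A mixed-separation of `G`: `A ∪ B = V(G)` and both `A \ B` and `B \ A` are nonempty. -/
def MixedSep (G : SimpleGraph V) (A B : Set V) : Prop :=
  A ∪ B = Set.univ ∧ (A \ B).Nonempty ∧ (B \ A).Nonempty

/-- The edges of the separator of `(A,B)`: the edges between `A \ B` and `B \ A`. -/
def sepEdges (G : SimpleGraph V) (A B : Set V) : Set (Sym2 V) :=
  {e | e ∈ G.edgeSet ∧ ∃ x ∈ A \ B, ∃ y ∈ B \ A, e = s(x, y)}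

/-- The separator of `(A,B)`: the vertices of `A ∩ B` together with the
edges between `A \ B` and `B \ A`, viewed as a set in `V ⊕ Sym2 V`. -/
def sepSet (G : SimpleGraph V) (A B : Set V) : Set (V ⊕ Sym2 V) :=
  (Sum.inl '' (A ∩ B)) ∪ (Sum.inr '' sepEdges G A B)

/-- The order of a mixed-separation: the size of its separator. -/
noncomputable def sepOrder (G : SimpleGraph V) (A B : Set V) : ℕ :=
  (sepSet G A B).ncard

/-- A mixed `k`-separation. -/
def MixedKSep (G : SimpleGraph V) (k : ℕ) (A B : Set V) : Prop :=
  MixedSep G A B ∧ sepOrder G A B = k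

/-- A tri-separation: a mixed 3-separation such that every vertex of `A ∩ B`
has at least two neighbours in both `G[A]` and `G[B]`. -/
def TriSep (G : SimpleGraph V) (A B : Set V) : Prop :=
  MixedKSep G 3 A B ∧
    ∀ v ∈ A ∩ B, 2 ≤ (G.neighborSet v ∩ A).ncard ∧ 2 ≤ (G.neighborSet v ∩ B).ncard

/-- Two mixed-separations are nested if, after possibly swapping the names of
the sides of either one, `A ⊆ C` and `B ⊇ D`. -/
def Nested (A B C D : Set V) : Prop :=
  (A ⊆ C ∧ D ⊆ B) ∨ (A ⊆ D ∧ C ⊆ B) ∨ (B ⊆ C ∧ D ⊆ A) ∨ (B ⊆ D ∧ C ⊆ A)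

/-- The induced subgraph `G[A]` contains a cycle. -/
def HasCycleIn (G : SimpleGraph V) (A : Set V) : Prop :=
  ∃ (u : V) (p : G.Walk u u), p.IsCycle ∧ ∀ x ∈ p.support, x ∈ A

/-- A mixed 3-separation is nontrivial if both sides induce a subgraph containing a cycle. -/
def NontrivialSep (G : SimpleGraph V) (A B : Set V) : Prop :=
  HasCycleIn G A ∧ HasCycleIn G B

/-- A mixed-separation is strong if every vertex in its separator has degree at least 4. -/
def StrongSep (G : SimpleGraph V) (A B : Set V) : Prop :=
  ∀ v ∈ A ∩ B, 4 ≤ (G.neighborSet v).ncard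

/-- A tri-separation is totally nested if it is nested with every tri-separation of `G`. -/
def TotallyNested (G : SimpleGraph V) (A B : Set V) : Prop :=
  ∀ C D : Set V, TriSep G C D → Nested A B C D

/-- A trivial tri-separation: its sides are the sides `{v}` and `V \ {v}` of an
atomic cut at a degree-3 vertex `v`. -/
def TrivialSep (G : SimpleGraph V) (A B : Set V) : Prop :=
  ∃ v : V, (G.neighborSet v).ncard = 3 ∧
    ((A = {v} ∧ B = {v}ᶜ) ∨ (B = {v} ∧ A = {v}ᶜ))

/-- Diagonal edges of the crossing-diagram of `(A,B)` and `(C,D)`: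
edges whose endvertices lie in opposite corners. -/
def diagEdges (G : SimpleGraph V) (A B C D : Set V) : Set (Sym2 V) :=
  {e | e ∈ G.edgeSet ∧ ∃ x y, e = s(x, y) ∧
    ((x ∈ (A \ B) ∩ (C \ D) ∧ y ∈ (B \ A) ∩ (D \ C)) ∨
     (x ∈ (A \ B) ∩ (D \ C) ∧ y ∈ (B \ A) ∩ (C \ D)))}

/-- The centre of the crossing-diagram: `A ∩ B ∩ C ∩ D` together with the diagonal edges. -/
def centre (G : SimpleGraph V) (A B C D : Set V) : Set (V ⊕ Sym2 V) :=
  (Sum.inl '' (A ∩ B ∩ C ∩ D)) ∪ (Sum.inr '' diagEdges G A B C D)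

/-- The link for the side `C` in the crossing-diagram of `(A,B)` and `(C,D)`:
the vertices `(A ∩ B) \ D` together with the non-diagonal edges of the separator
of `(A,B)` having an endvertex in a corner for `C`. -/
def link (G : SimpleGraph V) (A B C D : Set V) : Set (V ⊕ Sym2 V) :=
  (Sum.inl '' ((A ∩ B) \ D)) ∪
    (Sum.inr '' {e | e ∈ sepEdges G A B ∧ e ∉ diagEdges G A B C D ∧ ∃ x ∈ e, x ∈ C \ D})

/-- The corner-separator at the corner for `{A,C}`: the union of the links for `A`
and for `C` together with the centre, minus the diagonal edges without an
endvertex in the corner for `{A,C}`. -/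
def cornerSep (G : SimpleGraph V) (A B C D : Set V) : Set (V ⊕ Sym2 V) :=
  link G C D A B ∪ link G A B C D ∪ (Sum.inl '' (A ∩ B ∩ C ∩ D)) ∪
    (Sum.inr '' {e | e ∈ diagEdges G A B C D ∧ ∃ x ∈ e, x ∈ (A \ B) ∩ (C \ D)})

/-- Jumping edges: edges joining vertices of two opposite links. -/
def jumpEdges (G : SimpleGraph V) (A B C D : Set V) : Set (Sym2 V) :=
  {e | e ∈ G.edgeSet ∧ ∃ x y, e = s(x, y) ∧
    ((x ∈ (A ∩ B) \ D ∧ y ∈ (A ∩ B) \ C) ∨ (x ∈ (C ∩ D) \ B ∧ y ∈ (C ∩ D) \ A))}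

/-- A 2-separation: a separation of order two with no edges in its separator. -/
def TwoSep (G : SimpleGraph V) (A B : Set V) : Prop :=
  A ∪ B = Set.univ ∧ (A \ B).Nonempty ∧ (B \ A).Nonempty ∧
    (A ∩ B).ncard = 2 ∧ sepEdges G A B = ∅

/-- `K` is (the vertex set of) a connected component of `G - S`. -/
def IsCompOf (G : SimpleGraph V) (S K : Set V) : Prop :=
  ∃ c : (G.induce Sᶜ).ConnectedComponent, K = Subtype.val '' c.supp

section Aux

set_option linter.unusedSectionVars false

variable {V : Type*} [Fintype V] [DecidableEq V]

lemma neighborSet_image (G : SimpleGraph V) (φ : G ≃g G) (v : V) :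
    (φ : V → V) '' G.neighborSet v = G.neighborSet (φ v) := by
  ext x
  constructor
  · rintro ⟨y, hy, rfl⟩
    exact φ.map_adj_iff.2 hy
  · intro hx
    refine ⟨φ.symm x, ?_, by simp⟩
    have h1 : G.Adj (φ v) (φ (φ.symm x)) := by simpa using hx
    exact φ.map_adj_iff.1 h1

lemma deg_const (G : SimpleGraph V) (hvt : ∀ u v : V, ∃ φ : G ≃g G, φ u = v) (u v : V) :
    (G.neighborSet u).ncard = (G.neighborSet v).ncard := by
  obtain ⟨φ, hφ⟩ := hvt u v
  rw [← hφ, ← neighborSet_image, Set.ncard_image_of_injective _ φ.injective]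

lemma sepEdges_image (G : SimpleGraph V) (φ : G ≃g G) (A B : Set V) :
    sepEdges G ((φ : V → V) '' A) ((φ : V → V) '' B) = Sym2.map φ '' sepEdges G A B := by
  ext e
  simp only [sepEdges, Set.mem_setOf_eq, Set.mem_image]
  constructor
  · rintro ⟨he, x, hx, y, hy, rfl⟩
    rw [← Set.image_diff φ.injective] at hx hy
    obtain ⟨x0, hx0, rfl⟩ := hx
    obtain ⟨y0, hy0, rfl⟩ := hy
    have hadj : G.Adj x0 y0 := φ.map_adj_iff.1 (G.mem_edgeSet.1 he)
    exact ⟨s(x0, y0), ⟨G.mem_edgeSet.2 hadj, x0, hx0, y0, hy0, rfl⟩, Sym2.map_pair_eq _ _ _⟩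
  · rintro ⟨e0, ⟨he, x, hx, y, hy, rfl⟩, rfl⟩
    rw [Sym2.map_pair_eq]
    have hadj : G.Adj (φ x) (φ y) := φ.map_adj_iff.2 (G.mem_edgeSet.1 he)
    refine ⟨G.mem_edgeSet.2 hadj, φ x, ?_, φ y, ?_, rfl⟩
    · rw [← Set.image_diff φ.injective]; exact ⟨x, hx, rfl⟩
    · rw [← Set.image_diff φ.injective]; exact ⟨y, hy, rfl⟩

lemma sepOrder_image (G : SimpleGraph V) (φ : G ≃g G) (A B : Set V) :
    sepOrder G ((φ : V → V) '' A) ((φ : V → V) '' B) = sepOrder G A B := by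
  unfold sepOrder sepSet
  rw [sepEdges_image, ← Set.image_inter φ.injective]
  have h1 : Sum.inl '' ((φ : V → V) '' (A ∩ B)) =
      Sum.map (φ : V → V) (Sym2.map φ) '' (Sum.inl '' (A ∩ B) : Set (V ⊕ Sym2 V)) := by
    rw [← Set.image_comp, ← Set.image_comp]; rfl
  have h2 : Sum.inr '' (Sym2.map (φ : V → V) '' sepEdges G A B) =
      Sum.map (φ : V → V) (Sym2.map φ) '' (Sum.inr '' sepEdges G A B : Set (V ⊕ Sym2 V)) := by
    rw [← Set.image_comp, ← Set.image_comp]; rfl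
  rw [h1, h2, ← Set.image_union,
    Set.ncard_image_of_injective _ (φ.injective.sumMap (Sym2.map.injective φ.injective))]

lemma triSep_image (G : SimpleGraph V) (φ : G ≃g G) {A B : Set V} (h : TriSep G A B) :
    TriSep G ((φ : V → V) '' A) ((φ : V → V) '' B) := by
  obtain ⟨⟨⟨hu, hab, hba⟩, hord⟩, hdeg⟩ := h
  refine ⟨⟨⟨?_, ?_, ?_⟩, ?_⟩, ?_⟩
  · rw [← Set.image_union, hu, Set.image_univ, Set.range_eq_univ.2 φ.surjective]
  · rw [← Set.image_diff φ.injective]; exact hab.image _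
  · rw [← Set.image_diff φ.injective]; exact hba.image _
  · rw [sepOrder_image]; exact hord
  · rintro v hv
    rw [← Set.image_inter φ.injective] at hv
    obtain ⟨u, hu', rfl⟩ := hv
    constructor
    · have h1 : G.neighborSet (φ u) ∩ (φ : V → V) '' A = (φ : V → V) '' (G.neighborSet u ∩ A) := by
        rw [Set.image_inter φ.injective, neighborSet_image]
      rw [h1, Set.ncard_image_of_injective _ φ.injective]
      exact (hdeg u hu').1
    · have h1 : G.neighborSet (φ u) ∩ (φ : V → V) '' B = (φ : V → V) '' (G.neighborSet u ∩ B) := by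
        rw [Set.image_inter φ.injective, neighborSet_image]
      rw [h1, Set.ncard_image_of_injective _ φ.injective]
      exact (hdeg u hu').2

lemma sepEdges_comm (G : SimpleGraph V) (A B : Set V) : sepEdges G B A = sepEdges G A B := by
  ext e
  constructor
  · rintro ⟨he, x, hx, y, hy, rfl⟩
    exact ⟨he, y, hy, x, hx, Sym2.eq_swap⟩
  · rintro ⟨he, x, hx, y, hy, rfl⟩
    exact ⟨he, y, hy, x, hx, Sym2.eq_swap⟩

lemma triSep_comm (G : SimpleGraph V) {A B : Set V} (h : TriSep G A B) : TriSep G B A := by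
  obtain ⟨⟨⟨hu, hab, hba⟩, hord⟩, hdeg⟩ := h
  refine ⟨⟨⟨by rwa [Set.union_comm], hba, hab⟩, ?_⟩, ?_⟩
  · unfold sepOrder sepSet at *
    rwa [sepEdges_comm, Set.inter_comm]
  · intro v hv
    rw [Set.inter_comm] at hv
    exact (hdeg v hv).symm

lemma three_le_deg (G : SimpleGraph V) (h3 : KConnected 3 G) (v : V) :
    3 ≤ (G.neighborSet v).ncard := by
  by_contra hlt
  push_neg at hlt
  have hconn := h3.2 (G.neighborSet v) hlt
  have hsmall : (insert v (G.neighborSet v)).ncard < Nat.card V := by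
    have h1 : (insert v (G.neighborSet v)).ncard ≤ (G.neighborSet v).ncard + 1 :=
      Set.ncard_insert_le _ _
    have := h3.1
    omega
  have hex : ∃ w, w ∉ insert v (G.neighborSet v) := by
    by_contra hc
    push_neg at hc
    have : (insert v (G.neighborSet v)) = Set.univ := Set.eq_univ_of_forall hc
    rw [this, Set.ncard_univ] at hsmall
    omega
  obtain ⟨w, hw⟩ := hex
  have hvmem : v ∈ (G.neighborSet v)ᶜ := by
    simp [SimpleGraph.irrefl]
  have hwmem : w ∈ (G.neighborSet v)ᶜ := fun hc => hw (Set.mem_insert_iff.2 (Or.inr hc))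
  have hreach := hconn.preconnected ⟨v, hvmem⟩ ⟨w, hwmem⟩
  obtain ⟨p⟩ := hreach
  cases p with
  | nil => exact hw (Set.mem_insert_iff.2 (Or.inl rfl))
  | cons h q =>
    rename_i u
    have : G.Adj v u.1 := h
    exact u.2 this

lemma walk_cross (G : SimpleGraph V) {X A B : Set V} (hU : A ∪ B = Set.univ)
    {u w : ↥(Xᶜ)} (p : (G.induce Xᶜ).Walk u w) (hu : (u : V) ∈ A) (hw : (w : V) ∉ A) :
    ∃ x y : V, x ∈ A ∧ x ∉ X ∧ y ∈ B ∧ y ∉ A ∧ G.Adj x y := by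
  induction p with
  | nil => exact absurd hu hw
  | @cons a b c h q ih =>
    by_cases hb : (b : V) ∈ A
    · exact ih hb hw
    · have hbB : (b : V) ∈ B := by
        have : (b : V) ∈ A ∪ B := hU ▸ Set.mem_univ _
        exact this.resolve_left hb
      exact ⟨a, b, hu, a.2, hbB, hb, h⟩

lemma classify (G : SimpleGraph V) {A B : Set V} (hT : TriSep G A B)
    (hTN : TotallyNested G A B) (φ : G ≃g G) :
    ((φ : V → V) '' A = A ∧ (φ : V → V) '' B = B) ∨
      (A ⊆ (φ : V → V) '' B ∧ (φ : V → V) '' A ⊆ B) ∨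
      (B ⊆ (φ : V → V) '' A ∧ (φ : V → V) '' B ⊆ A) := by
  have hT' := triSep_image G φ hT
  rcases hTN _ _ hT' with ⟨h1, h2⟩ | h | h | ⟨h1, h2⟩
  · left
    constructor
    · exact (Set.eq_of_subset_of_ncard_le h1
        (by rw [Set.ncard_image_of_injective _ φ.injective])).symm
    · exact Set.eq_of_subset_of_ncard_le h2
        (by rw [Set.ncard_image_of_injective _ φ.injective])
  · exact Or.inr (Or.inl h)
  · exact Or.inr (Or.inr h)
  · left
    constructor
    · exact Set.eq_of_subset_of_ncard_le h2
        (by rw [Set.ncard_image_of_injective _ φ.injective])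
    · exact (Set.eq_of_subset_of_ncard_le h1
        (by rw [Set.ncard_image_of_injective _ φ.injective])).symm

lemma main_lemma (G : SimpleGraph V) (hvt : ∀ u v : V, ∃ φ : G ≃g G, φ u = v)
    (h3 : KConnected 3 G) {A B : Set V} (hT : TriSep G A B) (hN : NontrivialSep G A B)
    (hTN : TotallyNested G A B) (hab : A.ncard ≤ B.ncard) :
    A ∩ B = ∅ ∧ (sepEdges G A B).ncard = 3 ∧
      (∃ a b c : V, a ≠ b ∧ a ≠ c ∧ b ≠ c ∧ A = {a, b, c} ∧
        G.Adj a b ∧ G.Adj a c ∧ G.Adj b c) ∧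
      ∀ v : V, (G.neighborSet v).ncard = 3 := by
  classical
  -- Step 1: A ∩ B = ∅
  have hS : A ∩ B = ∅ := by
    by_contra hne
    obtain ⟨v, hv⟩ := Set.nonempty_iff_ne_empty.2 hne
    obtain ⟨u, huA, huB⟩ := hT.1.1.2.1
    obtain ⟨φ, hφ⟩ := hvt u v
    rcases classify G hT hTN φ with ⟨hA, hB⟩ | ⟨h1, h2⟩ | ⟨h1, h2⟩
    · have hmem : v ∈ (φ : V → V) '' B := hB.symm ▸ hv.2
      obtain ⟨u', hu', he⟩ := hmem
      have : u' = u := φ.injective (by rw [he, hφ])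
      exact huB (this ▸ hu')
    · obtain ⟨u', hu', he⟩ := h1 hv.1
      have : u' = u := φ.injective (by rw [he, hφ])
      exact huB (this ▸ hu')
    · have h3' : (φ : V → V) '' B = A := Set.eq_of_subset_of_ncard_le h2
        (by rw [Set.ncard_image_of_injective _ φ.injective]
            have := Set.ncard_le_ncard h1 (Set.toFinite _)
            rw [Set.ncard_image_of_injective _ φ.injective] at this
            omega)
      obtain ⟨u', hu', he⟩ := h3' ▸ hv.1
      have : u' = u := φ.injective (by rw [he, hφ])
      exact huB (this ▸ hu')
  have hdis : ∀ {x : V}, x ∈ A → x ∈ B → False := by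
    intro x hx hy
    have : x ∈ A ∩ B := ⟨hx, hy⟩
    rw [hS] at this
    exact this
  -- Step 2: sepEdges has 3 elements
  have hsep3 : (sepEdges G A B).ncard = 3 := by
    have h := hT.1.2
    unfold sepOrder sepSet at h
    rwa [hS, Set.image_empty, Set.empty_union,
      Set.ncard_image_of_injective _ Sum.inr_injective] at h
  -- Step 3: A has at least 3 vertices
  obtain ⟨u0, p, hp, hsupp⟩ := hN.1
  have hA3 : 3 ≤ A.ncard := by
    have h1 : p.support.tail.Nodup := hp.2
    have h2 : 3 ≤ p.length := hp.three_le_length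
    have h3' : p.support.tail.toFinset.card = p.support.tail.length :=
      List.toFinset_card_of_nodup h1
    have h4 : p.support.length = p.length + 1 := Walk.length_support p
    have h4' : p.support.tail.length = p.support.length - 1 := List.length_tail
    have h6 : (↑p.support.tail.toFinset : Set V) ⊆ A := by
      intro x hx
      have : x ∈ p.support.tail := by simpa using hx
      exact hsupp x (List.mem_of_mem_tail this)
    have h7 := Set.ncard_le_ncard h6 A.toFinite
    rw [Set.ncard_coe_finset] at h7
    omega
  -- Step 4: the set X of cross endpoints in A
  set X : Set V := {x | x ∈ A ∧ ∃ y, y ∈ B ∧ G.Adj x y} with hXdef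
  have hcross : ∀ x y : V, x ∈ A → y ∈ B → G.Adj x y → s(x, y) ∈ sepEdges G A B := by
    intro x y hx hy hadj
    exact ⟨G.mem_edgeSet.2 hadj, x, ⟨hx, fun h => hdis hx h⟩, y, ⟨hy, fun h => hdis h hy⟩, rfl⟩
  have hyex : ∀ x ∈ X, ∃ y, y ∈ B ∧ G.Adj x y := fun x hx => hx.2
  choose! yf hy using hyex
  set f : V → Sym2 V := fun x => s(x, yf x) with hfdef
  have hpair : ∀ {x₁ y₁ x₂ y₂ : V}, x₁ ∈ A → y₁ ∈ B → x₂ ∈ A → y₂ ∈ B →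
      s(x₁, y₁) = s(x₂, y₂) → x₁ = x₂ ∧ y₁ = y₂ := by
    intro x₁ y₁ x₂ y₂ h1 h2 h3' h4 he
    rw [Sym2.eq_iff] at he
    rcases he with h | ⟨ha, hb⟩
    · exact h
    · exact absurd (ha ▸ h4) (fun hc => hdis h1 hc)
  have hX_to : ∀ x ∈ X, f x ∈ sepEdges G A B := fun x hx =>
    hcross x (yf x) hx.1 (hy x hx).1 (hy x hx).2
  have hinj : Set.InjOn f X := by
    intro a ha b hb he
    exact (hpair ha.1 (hy a ha).1 hb.1 (hy b hb).1 he).1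
  have himgsub : f '' X ⊆ sepEdges G A B := by
    rintro e ⟨x, hx, rfl⟩
    exact hX_to x hx
  have hXle : X.ncard ≤ 3 := by
    rw [← hsep3, ← Set.ncard_image_of_injOn hinj]
    exact Set.ncard_le_ncard himgsub (Set.toFinite _)
  have hXge : 3 ≤ X.ncard := by
    by_contra hlt
    push_neg at hlt
    have hconn := h3.2 X hlt
    have hnAX : ¬ A ⊆ X := by
      intro hsub
      have := Set.ncard_le_ncard hsub (Set.toFinite _)
      omega
    obtain ⟨w, hwA, hwX⟩ := Set.not_subset.1 hnAX
    obtain ⟨z, hzB, hzA⟩ := hT.1.1.2.2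
    have hzX : z ∉ X := fun hz => hzA hz.1
    obtain ⟨p'⟩ := hconn.preconnected ⟨w, hwX⟩ ⟨z, hzX⟩
    obtain ⟨x, y, hxA, hxX, hyB, _, hadj⟩ := walk_cross G hT.1.1.1 p' hwA hzA
    exact hxX ⟨hxA, y, hyB, hadj⟩
  have hXcard : X.ncard = 3 := le_antisymm hXle hXge
  have hfX : f '' X = sepEdges G A B := by
    apply Set.eq_of_subset_of_ncard_le himgsub
    rw [Set.ncard_image_of_injOn hinj, hXcard, hsep3]
  have huniqB : ∀ x ∈ X, ∀ y' : V, y' ∈ B → G.Adj x y' → y' = yf x := by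
    intro x hx y' hy' hadj
    have hmem : s(x, y') ∈ f '' X := hfX.symm ▸ hcross x y' hx.1 hy' hadj
    obtain ⟨x', hx', he⟩ := hmem
    obtain ⟨he1, he2⟩ := hpair hx'.1 (hy x' hx').1 hx.1 hy' he
    rw [← he2, he1]
  have hNB1 : ∀ x ∈ X, G.neighborSet x ∩ B = {yf x} := by
    intro x hx
    apply Set.eq_singleton_iff_unique_mem.2
    refine ⟨⟨(hy x hx).2, (hy x hx).1⟩, ?_⟩
    rintro y' ⟨hy1, hy2⟩
    exact huniqB x hx y' hy2 hy1
  have hNB0 : ∀ w : V, w ∈ A → w ∉ X → G.neighborSet w ∩ B = ∅ := by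
    intro w hwA hwX
    by_contra hne
    obtain ⟨y', hy1, hy2⟩ := Set.nonempty_iff_ne_empty.2 hne
    exact hwX ⟨hwA, y', hy2, hy1⟩
  -- degree splitting
  have hsplit : ∀ v : V, (G.neighborSet v).ncard =
      (G.neighborSet v ∩ A).ncard + (G.neighborSet v ∩ B).ncard := by
    intro v
    rw [← Set.ncard_union_eq (Set.disjoint_left.2 fun x hx1 hx2 => hdis hx1.2 hx2.2)
      (Set.toFinite _) (Set.toFinite _), ← Set.inter_union_distrib_left, hT.1.1.1,
      Set.inter_univ]
  -- Step 5: A = X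
  have hAeqX : A = X := by
    have hsubXA : X ⊆ A := fun x hx => hx.1
    by_contra hne
    have hnAX : ¬ A ⊆ X := fun h' => hne (le_antisymm h' hsubXA)
    obtain ⟨w, hwA, hwX⟩ := Set.not_subset.1 hnAX
    have hXne : X.Nonempty := by
      rw [← Set.ncard_pos (Set.toFinite _)] at *
      omega
    obtain ⟨x0, hx0⟩ := hXne
    obtain ⟨φ, hφ⟩ := hvt w x0
    rcases classify G hT hTN φ with ⟨hA, hB⟩ | ⟨h1, h2⟩ | ⟨h1, h2⟩
    · have e1 : (φ : V → V) '' (G.neighborSet w ∩ A) = G.neighborSet x0 ∩ A := by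
        rw [Set.image_inter φ.injective, neighborSet_image, hφ, hA]
      have e2 : (G.neighborSet w ∩ A).ncard = (G.neighborSet x0 ∩ A).ncard := by
        rw [← e1, Set.ncard_image_of_injective _ φ.injective]
      have e3 := hsplit w
      have e4 := hsplit x0
      rw [hNB0 w hwA hwX, Set.ncard_empty] at e3
      rw [hNB1 x0 hx0, Set.ncard_singleton] at e4
      have e5 : (G.neighborSet w).ncard = (G.neighborSet x0).ncard := deg_const G hvt w x0
      omega
    · exact hdis (hsubXA hx0) (h2 ⟨w, hwA, hφ⟩)
    · have hBA : B = (φ : V → V) '' A := Set.eq_of_subset_of_ncard_le h1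
        (by rw [Set.ncard_image_of_injective _ φ.injective]; exact hab)
      exact hdis (hsubXA hx0) (hBA ▸ ⟨w, hwA, hφ⟩)
  have hAcard : A.ncard = 3 := by rw [hAeqX]; exact hXcard
  -- Step 6: the triangle
  have hdegA : ∀ x ∈ A, G.neighborSet x ∩ A = A \ {x} := by
    intro x hxA
    have hx : x ∈ X := hAeqX ▸ hxA
    have h1 : 3 ≤ (G.neighborSet x).ncard := three_le_deg G h3 x
    have h2 := hsplit x
    rw [hNB1 x hx, Set.ncard_singleton] at h2
    have hsub : G.neighborSet x ∩ A ⊆ A \ {x} := by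
      rintro z ⟨hz1, hz2⟩
      exact ⟨hz2, fun h => G.irrefl (h ▸ hz1)⟩
    have hdcard : (A \ {x}).ncard = 2 := by
      rw [Set.ncard_diff_singleton_of_mem hxA, hAcard]
    exact (Set.eq_of_subset_of_ncard_le hsub (by omega)).symm ▸ rfl
  obtain ⟨a, b, c, hab1, hac1, hbc1, hAeq⟩ := Set.ncard_eq_three.1 hAcard
  have haA : a ∈ A := by rw [hAeq]; exact Set.mem_insert _ _
  have hbA : b ∈ A := by rw [hAeq]; right; exact Set.mem_insert _ _
  have hcA : c ∈ A := by rw [hAeq]; right; right; rfl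
  have hAdjab : G.Adj a b := by
    have : b ∈ G.neighborSet a ∩ A := by
      rw [hdegA a haA]
      exact ⟨hbA, hab1.symm⟩
    exact this.1
  have hAdjac : G.Adj a c := by
    have : c ∈ G.neighborSet a ∩ A := by
      rw [hdegA a haA]
      exact ⟨hcA, hac1.symm⟩
    exact this.1
  have hAdjbc : G.Adj b c := by
    have : c ∈ G.neighborSet b ∩ A := by
      rw [hdegA b hbA]
      exact ⟨hcA, hbc1.symm⟩
    exact this.1
  -- every vertex has degree 3
  have hdega : (G.neighborSet a).ncard = 3 := by
    have h2 := hsplit a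
    rw [hNB1 a (hAeqX ▸ haA), Set.ncard_singleton, hdegA a haA,
      Set.ncard_diff_singleton_of_mem haA, hAcard] at h2
    omega
  refine ⟨hS, hsep3, ⟨a, b, c, hab1, hac1, hbc1, hAeq, hAdjab, hAdjac, hAdjbc⟩, ?_⟩
  intro v
  rw [deg_const G hvt v a]
  exact hdega

end Aux

/-- A 3-connected vertex-transitive finite connected graph with a
totally-nested nontrivial tri-separation has one whose separator consists of
three edges and one of whose sides induces a triangle; consequently every
vertex has degree three. -/
theorem stmt15 (G : SimpleGraph V) (hconn : G.Connected)
    (hvt : ∀ u v : V, ∃ φ : G ≃g G, φ u = v)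
    (h3 : KConnected 3 G)
    (h : ∃ A B : Set V, TriSep G A B ∧ NontrivialSep G A B ∧ TotallyNested G A B) :
    (∃ A B : Set V, TriSep G A B ∧ NontrivialSep G A B ∧ TotallyNested G A B ∧
        A ∩ B = ∅ ∧ (sepEdges G A B).ncard = 3 ∧
        ∃ a b c : V, a ≠ b ∧ a ≠ c ∧ b ≠ c ∧ A = {a, b, c} ∧
          G.Adj a b ∧ G.Adj a c ∧ G.Adj b c) ∧
      ∀ v : V, (G.neighborSet v).ncard = 3 := by
  obtain ⟨A, B, hT, hN, hTN⟩ := h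
  rcases le_total A.ncard B.ncard with hab | hab
  · obtain ⟨hS, hsep, htri, hdeg⟩ := main_lemma G hvt h3 hT hN hTN hab
    exact ⟨⟨A, B, hT, hN, hTN, hS, hsep, htri⟩, hdeg⟩
  · have hT' := triSep_comm G hT
    have hN' : NontrivialSep G B A := ⟨hN.2, hN.1⟩
    have hTN' : TotallyNested G B A := by
      intro C D hCD
      rcases hTN C D hCD with h' | h' | h' | h'
      · exact Or.inr (Or.inr (Or.inl h'))
      · exact Or.inr (Or.inr (Or.inr h'))
      · exact Or.inl h'
      · exact Or.inr (Or.inl h')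
    obtain ⟨hS, hsep, htri, hdeg⟩ := main_lemma G hvt h3 hT' hN' hTN' hab
    exact ⟨⟨B, A, hT', hN', hTN', hS, hsep, htri⟩, hdeg⟩

end Paper
end

section
/- Two 2-separations (A,B) and (C,D) of a 2-connected graph G cross if and only if one of the following holds: (X1) (A,B) separates the two vertices of C∩D and (C,D) separates the two vertices of A∩B; or (X2) A∩B = C∩D and there are four components H1,…,H4 of G−(A∩B) with H1,H2 ⊆ G[A], H3,H4 ⊆ G[B], H1,H3 ⊆ G[C], H2,H4 ⊆ G[D]. -/
namespace Paper

open SimpleGraph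

variable {V : Type*} [Fintype V] [DecidableEq V]

set_option linter.unusedSectionVars false
set_option linter.unusedVariables false

variable {G : SimpleGraph V} {A B C D S K : Set V}

lemma twoSep_symm (h : TwoSep G A B) : TwoSep G B A := by
  obtain ⟨hu, h1, h2, hn, he⟩ := h
  refine ⟨by rw [Set.union_comm]; exact hu, h2, h1, by rw [Set.inter_comm]; exact hn, ?_⟩
  ext e
  simp only [Set.mem_empty_iff_false, iff_false]
  rintro ⟨hee, x, hx, y, hy, rfl⟩
  have : s(y, x) ∈ sepEdges G A B := ⟨by rwa [Sym2.eq_swap] at hee, y, hy, x, hx, rfl⟩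
  rw [he] at this
  exact this

lemma adj_closure (h : TwoSep G A B) {x y : V} (hx : x ∈ A \ B) (hxy : G.Adj x y) : y ∈ A := by
  by_contra hy
  have hyB : y ∈ B := by
    have : y ∈ A ∪ B := h.1.symm ▸ Set.mem_univ y
    exact this.resolve_left hy
  have : s(x, y) ∈ sepEdges G A B := ⟨G.mem_edgeSet.mpr hxy, x, hx, y, ⟨hyB, hy⟩, rfl⟩
  rw [h.2.2.2.2] at this
  exact this

lemma walk_side (h : TwoSep G A B) {x y : V} (p : G.Walk x y)
    (hp : ∀ z ∈ p.support, z ∉ A ∩ B) (hx : x ∈ A \ B) : y ∈ A \ B := by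
  induction p with
  | nil => exact hx
  | @cons u w y hadj q ih =>
    have hwA : w ∈ A := adj_closure h hx hadj
    have hwS : w ∉ A ∩ B := hp w (by simp)
    exact ih (fun z hz => hp z (by simp [hz])) ⟨hwA, fun hwB => hwS ⟨hwA, hwB⟩⟩

lemma lift_walk {s : Set V} {u v : ↥s} (p : (G.induce s).Walk u v) :
    ∃ q : G.Walk u.val v.val, ∀ x ∈ q.support, x ∈ s := by
  induction p with
  | nil => exact ⟨Walk.nil, by simp⟩
  | @cons u w v hadj q ih =>
    obtain ⟨q', hq'⟩ := ih
    refine ⟨Walk.cons hadj q', ?_⟩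
    intro x hx
    rcases List.mem_cons.mp ((Walk.support_cons _ _) ▸ hx) with rfl | hx
    · exact u.2
    · exact hq' x hx

lemma comp_nonempty (h : IsCompOf G S K) : K.Nonempty := by
  obtain ⟨c, rfl⟩ := h
  obtain ⟨v, hv⟩ := c.exists_rep
  exact ⟨v.val, ⟨v, hv, rfl⟩⟩

lemma comp_notS (h : IsCompOf G S K) {x : V} (hx : x ∈ K) : x ∉ S := by
  obtain ⟨c, rfl⟩ := h
  obtain ⟨⟨x', hx'⟩, _, rfl⟩ := hx
  exact hx'

lemma comp_mem {x : V} (hx : x ∉ S) : ∃ K, IsCompOf G S K ∧ x ∈ K :=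
  ⟨Subtype.val '' ((G.induce Sᶜ).connectedComponentMk ⟨x, hx⟩).supp, ⟨_, rfl⟩,
    ⟨⟨x, hx⟩, by simp [ConnectedComponent.mem_supp_iff], rfl⟩⟩

lemma comp_walk (h : IsCompOf G S K) {x y : V} (hx : x ∈ K) (hy : y ∈ K) :
    ∃ p : G.Walk x y, ∀ z ∈ p.support, z ∉ S := by
  obtain ⟨c, rfl⟩ := h
  obtain ⟨x', hx', rfl⟩ := hx
  obtain ⟨y', hy', rfl⟩ := hy
  rw [ConnectedComponent.mem_supp_iff] at hx' hy'
  have hr : (G.induce Sᶜ).Reachable x' y' := ConnectedComponent.exact (hx'.trans hy'.symm)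
  obtain ⟨p⟩ := hr
  obtain ⟨q, hq⟩ := lift_walk p
  exact ⟨q, fun z hz => hq z hz⟩

lemma comp_side (hAB : TwoSep G A B) (hS : S = A ∩ B) (h : IsCompOf G S K) {x y : V}
    (hx : x ∈ K) (hxA : x ∈ A \ B) (hy : y ∈ K) : y ∈ A \ B := by
  obtain ⟨p, hp⟩ := comp_walk h hx hy
  exact walk_side hAB p (fun z hz => hS ▸ hp z hz) hxA



lemma F2aux (h : TwoSep G A B) {a : V} :
    ∀ {x b : V} (q : G.Walk x b), a ≠ b → A ∩ B = {a, b} → (∀ y ∈ q.support, y ≠ a) → x ∈ B →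
    ∃ p : G.Walk x b, ∀ y ∈ p.support, y ∈ B ∧ y ≠ a := by
  intro x b q
  induction q with
  | @nil u =>
    intro hab hS _ _
    have huB : u ∈ B := (hS.symm ▸ (Set.mem_insert_iff.mpr (Or.inr rfl)) : u ∈ A ∩ B).2
    exact ⟨Walk.nil, by simp [huB, hab.symm]⟩
  | @cons x y bb hadj q ih =>
    intro hab hS hsup hxB
    have hbB : bb ∈ B := (hS.symm ▸ (Set.mem_insert_iff.mpr (Or.inr rfl)) : bb ∈ A ∩ B).2
    have hxa : x ≠ a := hsup x (by simp)
    by_cases hxb : x = bb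
    · subst hxb; exact ⟨Walk.nil, by simp [hbB, hab.symm]⟩
    · by_cases hyB : y ∈ B
      · obtain ⟨p, hp⟩ := ih hab hS (fun z hz => hsup z (by simp [hz])) hyB
        refine ⟨Walk.cons hadj p, ?_⟩
        intro z hz
        rcases List.mem_cons.mp ((Walk.support_cons _ _) ▸ hz) with rfl | hz
        · exact ⟨hxB, hxa⟩
        · exact hp z hz
      · have hyA : y ∈ A := ((h.1.symm ▸ Set.mem_univ y : y ∈ A ∪ B)).resolve_right hyB
        have hxA : x ∈ A := adj_closure h ⟨hyA, hyB⟩ hadj.symm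
        have : x ∈ ({a, bb} : Set V) := hS ▸ ⟨hxA, hxB⟩
        rcases this with rfl | rfl
        · exact absurd rfl hxa
        · exact absurd rfl hxb

lemma F2 (h2 : KConnected 2 G) (h : TwoSep G A B) {a b : V} (hab : a ≠ b)
    (hS : A ∩ B = {a, b}) {x : V} (hxB : x ∈ B) (hxa : x ≠ a) :
    ∃ p : G.Walk x b, ∀ y ∈ p.support, y ∈ B ∧ y ≠ a := by
  have hconn := h2.2 {a} (by simp)
  have hreach := hconn.preconnected ⟨x, by simpa using hxa⟩ ⟨b, by simpa using hab.symm⟩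
  obtain ⟨p⟩ := hreach
  obtain ⟨q, hq⟩ := lift_walk p
  exact F2aux h q hab hS (fun y hy => by simpa using hq y hy) hxB

lemma F1 (h2 : KConnected 2 G) (h : TwoSep G A B) {a b : V} (hab : a ≠ b)
    (hS : A ∩ B = {a, b}) {x : V} (hxB : x ∈ B) :
    ∃ p : G.Walk x b, ∀ y ∈ p.support, y ∈ B := by
  have haA : a ∈ A := (hS.symm ▸ (Set.mem_insert _ _) : a ∈ A ∩ B).1
  have hbA : b ∈ A := (hS.symm ▸ (Set.mem_insert_iff.mpr (Or.inr rfl)) : b ∈ A ∩ B).1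
  by_cases hxa : x = a
  · subst hxa
    obtain ⟨z, hzB, hzA⟩ := h.2.2.1
    have hza : z ≠ x := fun hz => hzA (hz ▸ haA)
    have hzb : z ≠ b := fun hz => hzA (hz ▸ hbA)
    obtain ⟨p1, hp1⟩ := F2 h2 h hab hS hzB hza
    obtain ⟨p2, hp2⟩ := F2 h2 h hab.symm (by rw [hS, Set.pair_comm]) hzB hzb
    refine ⟨p2.reverse.append p1, ?_⟩
    intro y hy
    rcases (Walk.mem_support_append_iff _ _).mp hy with hy | hy
    · rw [Walk.support_reverse] at hy
      exact (hp2 y (List.mem_reverse.mp hy)).1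
    · exact (hp1 y hy).1
  · obtain ⟨p, hp⟩ := F2 h2 h hab hS hxB hxa
    exact ⟨p, fun y hy => (hp y hy).1⟩

lemma nested_swap1 (h : Nested A B C D) : Nested B A C D := by
  unfold Nested at h ⊢; tauto

lemma nested_swap2 (h : Nested A B C D) : Nested A B D C := by
  unfold Nested at h ⊢; tauto

lemma nested_pairs (h : Nested A B C D) : Nested C D A B := by
  unfold Nested at h ⊢; tauto

lemma keyM' (h2 : KConnected 2 G) (hAB : TwoSep G A B) (hCD : TwoSep G C D) {a b : V}
    (hab : a ≠ b) (hS : A ∩ B = {a, b}) (hTB : (C ∩ D) ∩ B ⊆ {a})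
    (hbC : b ∈ C \ D) : B ⊆ C ∧ D ⊆ A := by
  have hBC : B ⊆ C := by
    intro x hxB
    by_cases hxa : x = a
    · subst hxa
      by_cases haT : x ∈ C ∩ D
      · exact haT.1
      · obtain ⟨p, hp⟩ := F1 h2 hAB hab hS hxB
        have hsup : ∀ z ∈ p.reverse.support, z ∉ C ∩ D := by
          intro z hz hzT
          rw [Walk.support_reverse] at hz
          have hzB : z ∈ B := hp z (List.mem_reverse.mp hz)
          have : z = x := hTB ⟨hzT, hzB⟩
          exact haT (this ▸ hzT)
        exact (walk_side hCD p.reverse hsup hbC).1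
    · obtain ⟨p, hp⟩ := F2 h2 hAB hab hS hxB hxa
      have hsup : ∀ z ∈ p.reverse.support, z ∉ C ∩ D := by
        intro z hz hzT
        rw [Walk.support_reverse] at hz
        obtain ⟨hzB, hza⟩ := hp z (List.mem_reverse.mp hz)
        exact hza (hTB ⟨hzT, hzB⟩)
      exact (walk_side hCD p.reverse hsup hbC).1
  refine ⟨hBC, ?_⟩
  intro x hxD
  by_cases hxC : x ∈ C
  · by_cases hxB : x ∈ B
    · have hxa : x = a := hTB ⟨⟨hxC, hxD⟩, hxB⟩
      have : a ∈ A ∩ B := hS.symm ▸ Set.mem_insert _ _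
      exact hxa ▸ this.1
    · exact ((hAB.1.symm ▸ Set.mem_univ x : x ∈ A ∪ B)).resolve_right hxB
  · have hxB : x ∉ B := fun h => hxC (hBC h)
    exact ((hAB.1.symm ▸ Set.mem_univ x : x ∈ A ∪ B)).resolve_right hxB

lemma keyM (h2 : KConnected 2 G) (hAB : TwoSep G A B) (hCD : TwoSep G C D) {a b : V}
    (hab : a ≠ b) (hS : A ∩ B = {a, b}) (hTB : (C ∩ D) ∩ B ⊆ {a}) : Nested A B C D := by
  have hbB : b ∈ B := (hS.symm ▸ (Set.mem_insert_iff.mpr (Or.inr rfl)) : b ∈ A ∩ B).2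
  have hbT : b ∉ C ∩ D := fun h => hab (hTB ⟨h, hbB⟩).symm
  have hbCD : b ∈ C ∪ D := hCD.1.symm ▸ Set.mem_univ b
  rcases hbCD with hbC | hbD
  · exact Or.inr (Or.inr (Or.inl (keyM' h2 hAB hCD hab hS hTB ⟨hbC, fun hD => hbT ⟨hbC, hD⟩⟩)))
  · have hTB' : (D ∩ C) ∩ B ⊆ {a} := by rwa [Set.inter_comm D C]
    exact Or.inr (Or.inr (Or.inr (keyM' h2 hAB (twoSep_symm hCD) hab hS hTB'
      ⟨hbD, fun hC => hbT ⟨hC, hbD⟩⟩)))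

lemma lemN (hAB : TwoSep G A B) (hCD : TwoSep G C D) (hST : A ∩ B = C ∩ D)
    (hE : ∀ K, IsCompOf G (A ∩ B) K → K ⊆ A → K ⊆ C → False) : A ⊆ D ∧ C ⊆ B := by
  have hADB : A \ B ⊆ D \ C := by
    intro x hx
    have hxS : x ∉ A ∩ B := fun h => hx.2 h.2
    obtain ⟨K, hK, hxK⟩ := comp_mem hxS
    have hKA : ∀ y ∈ K, y ∈ A \ B := fun y hy => comp_side hAB rfl hK hxK hx hy
    have hxT : x ∉ C ∩ D := hST ▸ hxS
    by_cases hxC : x ∈ C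
    · have hxCD : x ∈ C \ D := ⟨hxC, fun hD => hxT ⟨hxC, hD⟩⟩
      have hKC : ∀ y ∈ K, y ∈ C \ D := fun y hy => comp_side hCD hST hK hxK hxCD hy
      exact absurd (hE K hK (fun y hy => (hKA y hy).1) (fun y hy => (hKC y hy).1)) id
    · have hxD : x ∈ D := ((hCD.1.symm ▸ Set.mem_univ x : x ∈ C ∪ D)).resolve_left hxC
      exact ⟨hxD, hxC⟩
  have hAD : A ⊆ D := by
    intro x hx
    by_cases hxB : x ∈ B
    · exact ((hST ▸ ⟨hx, hxB⟩ : x ∈ C ∩ D)).2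
    · exact (hADB ⟨hx, hxB⟩).1
  refine ⟨hAD, ?_⟩
  intro x hx
  by_cases hxB : x ∈ B
  · exact hxB
  · have hxA : x ∈ A := ((hAB.1.symm ▸ Set.mem_univ x : x ∈ A ∪ B)).resolve_right hxB
    exact absurd hx (hADB ⟨hxA, hxB⟩).2

lemma revX1 {a b c d : V} (haS : a ∈ A ∩ B) (hbS : b ∈ A ∩ B) (hcT : c ∈ C ∩ D)
    (hdT : d ∈ C ∩ D) (hc : c ∈ A \ B) (hd : d ∈ B \ A) (ha : a ∈ C \ D) (hb : b ∈ D \ C) :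
    ¬ Nested A B C D := by
  rintro (⟨h1, h2⟩ | ⟨h1, h2⟩ | ⟨h1, h2⟩ | ⟨h1, h2⟩)
  · exact hb.2 (h1 hbS.1)
  · exact ha.2 (h1 haS.1)
  · exact hd.2 (h2 hdT.2)
  · exact ha.2 (h1 haS.2)

lemma notMemT {a b c d : V} (hST : A ∩ B ≠ C ∩ D) (hS : A ∩ B = {a, b}) (hT : C ∩ D = {c, d})
    (n1 : ¬((C ∩ D) ∩ B ⊆ {a})) (n2 : ¬((C ∩ D) ∩ A ⊆ {a})) : a ∉ C ∩ D := by
  intro haT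
  obtain ⟨t1, ht1, ht1a⟩ := Set.not_subset.mp n1
  obtain ⟨t2, ht2, ht2a⟩ := Set.not_subset.mp n2
  have ht1a : t1 ≠ a := fun h => ht1a (by simp [h])
  have ht2a : t2 ≠ a := fun h => ht2a (by simp [h])
  have haT' : a ∈ ({c, d} : Set V) := hT ▸ haT
  have ht1T : t1 ∈ ({c, d} : Set V) := hT ▸ ht1.1
  have ht2T : t2 ∈ ({c, d} : Set V) := hT ▸ ht2.1
  rcases haT' with rfl | rfl
  · -- a = c
    have ht1d : t1 = d := ht1T.resolve_left ht1a
    have ht2d : t2 = d := ht2T.resolve_left ht2a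
    have hdS : d ∈ A ∩ B := ⟨ht2d ▸ ht2.2, ht1d ▸ ht1.2⟩
    have : d ∈ ({a, b} : Set V) := hS ▸ hdS
    rcases this with rfl | rfl
    · exact ht1a ht1d
    · exact hST (hS.trans hT.symm)
  · -- a = d
    have ht1c : t1 = c := ht1T.resolve_right ht1a
    have ht2c : t2 = c := ht2T.resolve_right ht2a
    have hcS : c ∈ A ∩ B := ⟨ht2c ▸ ht2.2, ht1c ▸ ht1.2⟩
    have : c ∈ ({a, b} : Set V) := hS ▸ hcS
    rcases this with rfl | rfl
    · exact ht1a ht1c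
    · exact hST (hS.trans (by rw [hT, Set.pair_comm]))


/-- Two 2-separations of a 2-connected graph cross iff they cross
like in a cycle (X1) or with a four-flip (X2). -/
theorem stmt16 (G : SimpleGraph V) (h2 : KConnected 2 G) (A B C D : Set V)
    (hAB : TwoSep G A B) (hCD : TwoSep G C D) :
    ¬ Nested A B C D ↔
      ((∃ c d : V, c ≠ d ∧ C ∩ D = {c, d} ∧
          ((c ∈ A \ B ∧ d ∈ B \ A) ∨ (c ∈ B \ A ∧ d ∈ A \ B)) ∧
          ∃ a b : V, a ≠ b ∧ A ∩ B = {a, b} ∧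
            ((a ∈ C \ D ∧ b ∈ D \ C) ∨ (a ∈ D \ C ∧ b ∈ C \ D))) ∨
        (A ∩ B = C ∩ D ∧ ∃ H1 H2 H3 H4 : Set V,
          IsCompOf G (A ∩ B) H1 ∧ IsCompOf G (A ∩ B) H2 ∧
          IsCompOf G (A ∩ B) H3 ∧ IsCompOf G (A ∩ B) H4 ∧
          H1 ≠ H2 ∧ H1 ≠ H3 ∧ H1 ≠ H4 ∧ H2 ≠ H3 ∧ H2 ≠ H4 ∧ H3 ≠ H4 ∧
          H1 ⊆ A ∧ H2 ⊆ A ∧ H3 ⊆ B ∧ H4 ⊆ B ∧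
          H1 ⊆ C ∧ H3 ⊆ C ∧ H2 ⊆ D ∧ H4 ⊆ D)) := by

  constructor
  · intro hN
    by_cases hST : A ∩ B = C ∩ D
    · -- X2 case
      right
      refine ⟨hST, ?_⟩
      have e1 : ∃ K, IsCompOf G (A ∩ B) K ∧ K ⊆ A ∧ K ⊆ C := by
        by_contra h
        exact hN (Or.inr (Or.inl (lemN hAB hCD hST
          (fun K hK hA hC => h ⟨K, hK, hA, hC⟩))))
      have e2 : ∃ K, IsCompOf G (A ∩ B) K ∧ K ⊆ A ∧ K ⊆ D := by
        by_contra h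
        exact hN (Or.inl (lemN hAB (twoSep_symm hCD) (by rw [hST, Set.inter_comm])
          (fun K hK hA hD => h ⟨K, hK, hA, hD⟩)))
      have e3 : ∃ K, IsCompOf G (A ∩ B) K ∧ K ⊆ B ∧ K ⊆ C := by
        by_contra h
        exact hN (Or.inr (Or.inr (Or.inr (lemN (twoSep_symm hAB) hCD
          (by rw [Set.inter_comm B A]; exact hST)
          (fun K hK hB hC => h ⟨K, by rwa [Set.inter_comm B A] at hK, hB, hC⟩)))))
      have e4 : ∃ K, IsCompOf G (A ∩ B) K ∧ K ⊆ B ∧ K ⊆ D := by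
        by_contra h
        exact hN (Or.inr (Or.inr (Or.inl (lemN (twoSep_symm hAB) (twoSep_symm hCD)
          (by rw [Set.inter_comm B A, Set.inter_comm D C]; exact hST)
          (fun K hK hB hD => h ⟨K, by rwa [Set.inter_comm B A] at hK, hB, hD⟩)))))
      obtain ⟨H1, hc1, h1A, h1C⟩ := e1
      obtain ⟨H2, hc2, h2A, h2D⟩ := e2
      obtain ⟨H3, hc3, h3B, h3C⟩ := e3
      obtain ⟨H4, hc4, h4B, h4D⟩ := e4
      -- refined side facts
      have sideAB : ∀ {K : Set V}, IsCompOf G (A ∩ B) K → K ⊆ A → K ⊆ A \ B :=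
        fun {K} hK hKA x hx => ⟨hKA hx, fun hB => comp_notS hK hx ⟨hKA hx, hB⟩⟩
      have sideBA : ∀ {K : Set V}, IsCompOf G (A ∩ B) K → K ⊆ B → K ⊆ B \ A :=
        fun {K} hK hKB x hx => ⟨hKB hx, fun hA => comp_notS hK hx ⟨hA, hKB hx⟩⟩
      have sideCD : ∀ {K : Set V}, IsCompOf G (A ∩ B) K → K ⊆ C → K ⊆ C \ D :=
        fun {K} hK hKC x hx => ⟨hKC hx, fun hD => comp_notS hK hx (hST ▸ ⟨hKC hx, hD⟩)⟩
      have sideDC : ∀ {K : Set V}, IsCompOf G (A ∩ B) K → K ⊆ D → K ⊆ D \ C :=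
        fun {K} hK hKD x hx => ⟨hKD hx, fun hC => comp_notS hK hx (hST ▸ ⟨hC, hKD hx⟩)⟩
      have ne12 : H1 ≠ H2 := by
        obtain ⟨x, hx⟩ := comp_nonempty hc1
        intro h
        exact (sideDC hc2 h2D (h ▸ hx)).2 (sideCD hc1 h1C hx).1
      have ne13 : H1 ≠ H3 := by
        obtain ⟨x, hx⟩ := comp_nonempty hc1
        intro h
        exact (sideBA hc3 h3B (h ▸ hx)).2 (sideAB hc1 h1A hx).1
      have ne14 : H1 ≠ H4 := by
        obtain ⟨x, hx⟩ := comp_nonempty hc1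
        intro h
        exact (sideDC hc4 h4D (h ▸ hx)).2 (sideCD hc1 h1C hx).1
      have ne23 : H2 ≠ H3 := by
        obtain ⟨x, hx⟩ := comp_nonempty hc2
        intro h
        exact (sideBA hc3 h3B (h ▸ hx)).2 (sideAB hc2 h2A hx).1
      have ne24 : H2 ≠ H4 := by
        obtain ⟨x, hx⟩ := comp_nonempty hc2
        intro h
        exact (sideBA hc4 h4B (h ▸ hx)).2 (sideAB hc2 h2A hx).1
      have ne34 : H3 ≠ H4 := by
        obtain ⟨x, hx⟩ := comp_nonempty hc3
        intro h
        exact (sideDC hc4 h4D (h ▸ hx)).2 (sideCD hc3 h3C hx).1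
      exact ⟨H1, H2, H3, H4, hc1, hc2, hc3, hc4, ne12, ne13, ne14, ne23, ne24, ne34,
        h1A, h2A, h3B, h4B, h1C, h3C, h2D, h4D⟩
    · -- X1 case
      left
      obtain ⟨a, b, hab, hS⟩ := Set.ncard_eq_two.mp hAB.2.2.2.1
      obtain ⟨c, d, hcd, hT⟩ := Set.ncard_eq_two.mp hCD.2.2.2.1
      have nBa : ¬((C ∩ D) ∩ B ⊆ {a}) := fun h => hN (keyM h2 hAB hCD hab hS h)
      have nBb : ¬((C ∩ D) ∩ B ⊆ {b}) := fun h =>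
        hN (keyM h2 hAB hCD hab.symm (by rw [hS, Set.pair_comm]) h)
      have nAa : ¬((C ∩ D) ∩ A ⊆ {a}) := fun h =>
        hN (nested_swap1 (keyM h2 (twoSep_symm hAB) hCD hab
          (by rw [Set.inter_comm B A]; exact hS) h))
      have nAb : ¬((C ∩ D) ∩ A ⊆ {b}) := fun h =>
        hN (nested_swap1 (keyM h2 (twoSep_symm hAB) hCD hab.symm
          (by rw [Set.inter_comm B A, hS, Set.pair_comm]) h))
      have nDc : ¬((A ∩ B) ∩ D ⊆ {c}) := fun h =>
        hN (nested_pairs (keyM h2 hCD hAB hcd hT h))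
      have nDd : ¬((A ∩ B) ∩ D ⊆ {d}) := fun h =>
        hN (nested_pairs (keyM h2 hCD hAB hcd.symm (by rw [hT, Set.pair_comm]) h))
      have nCc : ¬((A ∩ B) ∩ C ⊆ {c}) := fun h =>
        hN (nested_swap2 (nested_pairs (keyM h2 (twoSep_symm hCD) hAB hcd
          (by rw [Set.inter_comm D C]; exact hT) h)))
      have nCd : ¬((A ∩ B) ∩ C ⊆ {d}) := fun h =>
        hN (nested_swap2 (nested_pairs (keyM h2 (twoSep_symm hCD) hAB hcd.symm
          (by rw [Set.inter_comm D C, hT, Set.pair_comm]) h)))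
      have haT : a ∉ C ∩ D := notMemT hST hS hT nBa nAa
      have hbT : b ∉ C ∩ D := notMemT hST (by rw [hS, Set.pair_comm]) hT nBb nAb
      have hcS : c ∉ A ∩ B := notMemT (Ne.symm hST) hT hS nDc nCc
      have hdS : d ∉ A ∩ B := notMemT (Ne.symm hST) (by rw [hT, Set.pair_comm]) hS nDd nCd
      have hcT : c ∈ C ∩ D := hT.symm ▸ Set.mem_insert _ _
      have hdT : d ∈ C ∩ D := hT.symm ▸ Set.mem_insert_iff.mpr (Or.inr rfl)
      have haS : a ∈ A ∩ B := hS.symm ▸ Set.mem_insert _ _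
      have hbS : b ∈ A ∩ B := hS.symm ▸ Set.mem_insert_iff.mpr (Or.inr rfl)
      have hc' : c ∈ A \ B ∨ c ∈ B \ A := by
        rcases (hAB.1.symm ▸ Set.mem_univ c : c ∈ A ∪ B) with h | h
        · exact Or.inl ⟨h, fun hB => hcS ⟨h, hB⟩⟩
        · exact Or.inr ⟨h, fun hA => hcS ⟨hA, h⟩⟩
      have hd' : d ∈ A \ B ∨ d ∈ B \ A := by
        rcases (hAB.1.symm ▸ Set.mem_univ d : d ∈ A ∪ B) with h | h
        · exact Or.inl ⟨h, fun hB => hdS ⟨h, hB⟩⟩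
        · exact Or.inr ⟨h, fun hA => hdS ⟨hA, h⟩⟩
      have ha' : a ∈ C \ D ∨ a ∈ D \ C := by
        rcases (hCD.1.symm ▸ Set.mem_univ a : a ∈ C ∪ D) with h | h
        · exact Or.inl ⟨h, fun hD => haT ⟨h, hD⟩⟩
        · exact Or.inr ⟨h, fun hC => haT ⟨hC, h⟩⟩
      have hb' : b ∈ C \ D ∨ b ∈ D \ C := by
        rcases (hCD.1.symm ▸ Set.mem_univ b : b ∈ C ∪ D) with h | h
        · exact Or.inl ⟨h, fun hD => hbT ⟨h, hD⟩⟩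
        · exact Or.inr ⟨h, fun hC => hbT ⟨hC, h⟩⟩
      have sideT : (c ∈ A \ B ∧ d ∈ B \ A) ∨ (c ∈ B \ A ∧ d ∈ A \ B) := by
        rcases hc' with hc1 | hc1 <;> rcases hd' with hd1 | hd1
        · exfalso
          apply nBa
          rintro t ⟨htT, htB⟩
          rcases (hT ▸ htT : t ∈ ({c, d} : Set V)) with rfl | rfl
          · exact absurd htB hc1.2
          · exact absurd htB hd1.2
        · exact Or.inl ⟨hc1, hd1⟩
        · exact Or.inr ⟨hc1, hd1⟩
        · exfalso
          apply nAa
          rintro t ⟨htT, htA⟩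
          rcases (hT ▸ htT : t ∈ ({c, d} : Set V)) with rfl | rfl
          · exact absurd htA hc1.2
          · exact absurd htA hd1.2
      have sideS : (a ∈ C \ D ∧ b ∈ D \ C) ∨ (a ∈ D \ C ∧ b ∈ C \ D) := by
        rcases ha' with ha1 | ha1 <;> rcases hb' with hb1 | hb1
        · exfalso
          apply nDc
          rintro t ⟨htS, htD⟩
          rcases (hS ▸ htS : t ∈ ({a, b} : Set V)) with rfl | rfl
          · exact absurd htD ha1.2
          · exact absurd htD hb1.2
        · exact Or.inl ⟨ha1, hb1⟩
        · exact Or.inr ⟨ha1, hb1⟩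
        · exfalso
          apply nCc
          rintro t ⟨htS, htC⟩
          rcases (hS ▸ htS : t ∈ ({a, b} : Set V)) with rfl | rfl
          · exact absurd htC ha1.2
          · exact absurd htC hb1.2
      exact ⟨c, d, hcd, hT, sideT, a, b, hab, hS, sideS⟩
  · rintro (⟨c, d, hcd, hT, sideT, a, b, hab, hS, sideS⟩ | ⟨hST, H1, H2, H3, H4,
      hc1, hc2, hc3, hc4, _, _, _, _, _, _, h1A, h2A, h3B, h4B, h1C, h3C, h2D, h4D⟩)
    · have haS : a ∈ A ∩ B := hS.symm ▸ Set.mem_insert _ _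
      have hbS : b ∈ A ∩ B := hS.symm ▸ Set.mem_insert_iff.mpr (Or.inr rfl)
      have hcT : c ∈ C ∩ D := hT.symm ▸ Set.mem_insert _ _
      have hdT : d ∈ C ∩ D := hT.symm ▸ Set.mem_insert_iff.mpr (Or.inr rfl)
      rcases sideT with ⟨hc1, hd1⟩ | ⟨hc1, hd1⟩ <;> rcases sideS with ⟨ha1, hb1⟩ | ⟨ha1, hb1⟩
      · exact revX1 haS hbS hcT hdT hc1 hd1 ha1 hb1
      · exact revX1 hbS haS hcT hdT hc1 hd1 hb1 ha1
      · exact revX1 haS hbS hdT hcT hd1 hc1 ha1 hb1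
      · exact revX1 hbS haS hdT hcT hd1 hc1 hb1 ha1
    · intro hN
      obtain ⟨x1, hx1⟩ := comp_nonempty hc1
      obtain ⟨x2, hx2⟩ := comp_nonempty hc2
      obtain ⟨x3, hx3⟩ := comp_nonempty hc3
      obtain ⟨x4, hx4⟩ := comp_nonempty hc4
      have s1 : x1 ∈ (A \ B) ∩ (C \ D) :=
        ⟨⟨h1A hx1, fun h => comp_notS hc1 hx1 ⟨h1A hx1, h⟩⟩,
         ⟨h1C hx1, fun h => comp_notS hc1 hx1 (hST ▸ ⟨h1C hx1, h⟩)⟩⟩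
      have s2 : x2 ∈ (A \ B) ∩ (D \ C) :=
        ⟨⟨h2A hx2, fun h => comp_notS hc2 hx2 ⟨h2A hx2, h⟩⟩,
         ⟨h2D hx2, fun h => comp_notS hc2 hx2 (hST ▸ ⟨h, h2D hx2⟩)⟩⟩
      have s3 : x3 ∈ (B \ A) ∩ (C \ D) :=
        ⟨⟨h3B hx3, fun h => comp_notS hc3 hx3 ⟨h, h3B hx3⟩⟩,
         ⟨h3C hx3, fun h => comp_notS hc3 hx3 (hST ▸ ⟨h3C hx3, h⟩)⟩⟩
      have s4 : x4 ∈ (B \ A) ∩ (D \ C) :=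
        ⟨⟨h4B hx4, fun h => comp_notS hc4 hx4 ⟨h, h4B hx4⟩⟩,
         ⟨h4D hx4, fun h => comp_notS hc4 hx4 (hST ▸ ⟨h, h4D hx4⟩)⟩⟩
      rcases hN with ⟨g1, g2⟩ | ⟨g1, g2⟩ | ⟨g1, g2⟩ | ⟨g1, g2⟩
      · exact s2.2.2 (g1 s2.1.1)
      · exact s1.2.2 (g1 s1.1.1)
      · exact s4.2.2 (g1 s4.1.1)
      · exact s3.2.2 (g1 s3.1.1)

end Paper
end

section
/- Every vertex-transitive finite connected graph is 3-connected, a cycle, a K2, or a K1. -/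
namespace Paper

open SimpleGraph

variable {V : Type*} [Fintype V] [DecidableEq V]

-- ===== auxiliary development =====
set_option linter.unusedSectionVars false
set_option linter.unusedVariables false
set_option linter.unreachableTactic false
set_option linter.unusedTactic false
set_option maxHeartbeats 1000000

def ROut (G : SimpleGraph V) (S : Set V) (x y : V) : Prop :=
  ∃ p : G.Walk x y, ∀ z ∈ p.support, z ∉ S

def Sep (G : SimpleGraph V) (S : Set V) : Prop :=
  ∃ x y : V, x ∉ S ∧ y ∉ S ∧ ¬ ROut G S x y

def comp (G : SimpleGraph V) (S : Set V) (x : V) : Set V :=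
  {y | y ∉ S ∧ ROut G S x y}

variable {G : SimpleGraph V} {S T X : Set V} {x y z : V}


lemma not_connected_induce {S : Set V} (hne : Sᶜ.Nonempty) (h : ¬ (G.induce Sᶜ).Connected) :
    Sep G S := by
  by_contra hs
  apply h
  obtain ⟨u, hu⟩ := hne
  apply G.induce_connected_of_patches u hu
  intro v hv
  have hr : ROut G S u v := by
    by_contra hc
    exact hs ⟨u, v, hu, hv, hc⟩
  obtain ⟨p, hp⟩ := hr
  refine ⟨{z | z ∈ p.support}, fun z hz => hp z hz, p.start_mem_support, p.end_mem_support, ?_⟩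
  exact (p.connected_induce_support).preconnected _ _

lemma connected_induce_of_not_sep {S : Set V} (hne : Sᶜ.Nonempty) (h : ¬ Sep G S) :
    (G.induce Sᶜ).Connected := by
  by_contra hc
  exact h (not_connected_induce hne hc)

lemma exists_adj_of_connected (hconn : G.Connected) (hcard : 2 ≤ Fintype.card V) (v : V) :
    ∃ w, G.Adj v w := by
  obtain ⟨w, hw⟩ := Fintype.exists_ne_of_one_lt_card (by omega) v
  obtain ⟨p⟩ := hconn.preconnected v w
  cases p with
  | nil => exact absurd rfl hw
  | cons h p => exact ⟨_, h⟩

lemma ROut.refl (hx : x ∉ S) : ROut G S x x :=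
  ⟨Walk.nil, by simp [hx]⟩

lemma ROut.symm (h : ROut G S x y) : ROut G S y x := by
  obtain ⟨p, hp⟩ := h
  exact ⟨p.reverse, by simpa using hp⟩

lemma ROut.trans (h : ROut G S x y) (h' : ROut G S y z) : ROut G S x z := by
  obtain ⟨p, hp⟩ := h; obtain ⟨q, hq⟩ := h'
  refine ⟨p.append q, fun w hw => ?_⟩
  rw [Walk.mem_support_append_iff] at hw
  exact hw.elim (hp w) (hq w)

lemma ROut.adj (hxy : G.Adj x y) (hx : x ∉ S) (hy : y ∉ S) : ROut G S x y :=
  ⟨hxy.toWalk, by simp [hx, hy]⟩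

lemma closed_walk (hX : ∀ a ∈ X, ∀ b, G.Adj a b → b ∉ T → b ∈ X)
    (p : G.Walk x y) (hp : ∀ z ∈ p.support, z ∉ T) (hx : x ∈ X) : y ∈ X := by
  induction p with
  | nil => exact hx
  | @cons a b c hab q ih =>
    refine ih (fun z hz => hp z (by simp [hz])) ?_
    exact hX a hx b hab (hp b (by simp))

lemma closed_rout (hX : ∀ a ∈ X, ∀ b, G.Adj a b → b ∉ T → b ∈ X)
    (h : ROut G T x y) (hx : x ∈ X) : y ∈ X := by
  obtain ⟨p, hp⟩ := h; exact closed_walk hX p hp hx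

lemma mem_comp_self (hx : x ∉ S) : x ∈ comp G S x := ⟨hx, ROut.refl hx⟩

lemma comp_closed (hy : y ∈ comp G S x) (hyz : G.Adj y z) (hz : z ∉ S) :
    z ∈ comp G S x := ⟨hz, hy.2.trans (ROut.adj hyz hy.1 hz)⟩

lemma comp_subset_closed (hX : ∀ a ∈ X, ∀ b, G.Adj a b → b ∉ S → b ∈ X)
    (hx : x ∈ X) : comp G S x ⊆ X := by
  rintro y ⟨hyS, hr⟩
  exact closed_rout hX hr hx

lemma sep_of_closed (hX : ∀ a ∈ X, ∀ b, G.Adj a b → b ∉ T → b ∈ X)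
    (hx : x ∈ X) (hxT : x ∉ T) (hw : y ∉ X) (hwT : y ∉ T) : Sep G T :=
  ⟨x, y, hxT, hwT, fun hr => hw (closed_rout hX hr hx)⟩

lemma tripart {P Q R : Set V} (hu : P ∪ Q ∪ R = Set.univ) (h1 : Disjoint P Q)
    (h2 : Disjoint P R) (h3 : Disjoint Q R) (X : Set V) :
    X.ncard = (X ∩ P).ncard + (X ∩ Q).ncard + (X ∩ R).ncard := by
  have key : X = (X ∩ P) ∪ (X ∩ Q) ∪ (X ∩ R) := by
    rw [← Set.inter_union_distrib_left, ← Set.inter_union_distrib_left, hu, Set.inter_univ]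
  conv_lhs => rw [key]
  rw [Set.ncard_union_eq (by
    exact Set.disjoint_union_left.mpr ⟨(h2.mono (Set.inter_subset_right) (Set.inter_subset_right)),
      (h3.mono (Set.inter_subset_right) (Set.inter_subset_right))⟩) (Set.toFinite _) (Set.toFinite _),
    Set.ncard_union_eq (h1.mono Set.inter_subset_right Set.inter_subset_right)
      (Set.toFinite _) (Set.toFinite _)]

/-- `F` is a fragment with separator `S` of order `κ`. -/
def Frag (G : SimpleGraph V) (κ : ℕ) (F S : Set V) : Prop :=
  S.ncard = κ ∧ (∃ x, x ∉ S ∧ F = comp G S x) ∧ ∃ w, w ∉ S ∧ w ∉ F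

namespace Frag

variable {κ : ℕ} {F A : Set V}

lemma nonempty (h : Frag G κ F S) : F.Nonempty := by
  obtain ⟨-, ⟨x, hx, rfl⟩, -⟩ := h
  exact ⟨x, mem_comp_self hx⟩

lemma closed (h : Frag G κ F S) : ∀ a ∈ F, ∀ b, G.Adj a b → b ∉ S → b ∈ F := by
  obtain ⟨-, ⟨x, hx, rfl⟩, -⟩ := h
  exact fun a ha b hab hb => comp_closed ha hab hb

lemma disjS (h : Frag G κ F S) : Disjoint F S := by
  obtain ⟨-, ⟨x, hx, rfl⟩, -⟩ := h
  exact Set.disjoint_left.mpr fun a ha => ha.1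

lemma cardS (h : Frag G κ F S) : S.ncard = κ := h.1

lemma copart (h : Frag G κ F S) : F ∪ (F ∪ S)ᶜ ∪ S = Set.univ := by
  ext z; by_cases hz : z ∈ F <;> by_cases hz' : z ∈ S <;> simp [hz, hz']

lemma codisj1 (h : Frag G κ F S) : Disjoint F (F ∪ S)ᶜ :=
  Set.disjoint_left.mpr fun a ha hc => hc (Or.inl ha)

lemma codisj2 (h : Frag G κ F S) : Disjoint (F ∪ S)ᶜ S :=
  Set.disjoint_left.mpr fun a ha hc => ha (Or.inr hc)

lemma co_closed (h : Frag G κ F S) :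
    ∀ a ∈ (F ∪ S)ᶜ, ∀ b, G.Adj a b → b ∉ S → b ∈ (F ∪ S)ᶜ := by
  intro a ha b hab hb hc
  rcases hc with hbF | hbS
  · exact ha (Or.inl (h.closed b hbF a hab.symm (fun hS => ha (Or.inr hS))))
  · exact hb hbS

end Frag

section Cross

variable {κ m : ℕ} {A F1 F2 : Set V}

/-- Step 1 of the crossing argument. -/
lemma step1
    (hκ : κ ≤ 2)
    (hsepmin : ∀ T : Set V, Sep G T → T.ncard ≤ 2 → κ ≤ T.ncard)
    (hfragmin : ∀ F S : Set V, Frag G κ F S → m ≤ F.ncard)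
    (hA : Frag G κ A S) (hAm : A.ncard = m)
    (hT : T.ncard = κ)
    (hcover : F1 ∪ F2 ∪ T = Set.univ)
    (h12 : Disjoint F1 F2) (h1T : Disjoint F1 T) (h2T : Disjoint F2 T)
    (hF2ne : F2.Nonempty)
    (hF1cl : ∀ a ∈ F1, ∀ b, G.Adj a b → b ∉ T → b ∈ F1)
    (hne : (A ∩ F1).Nonempty) (haT : (A ∩ T).Nonempty) :
    (T ∩ (A ∪ S)ᶜ).ncard < (S ∩ F1).ncard := by
  obtain ⟨x, hxA, hxF1⟩ := hne
  obtain ⟨a', ha'A, ha'T⟩ := haT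
  obtain ⟨w, hwF2⟩ := hF2ne
  set T1 : Set V := (S ∩ F1) ∪ (S ∩ T) ∪ (A ∩ T) with hT1def
  -- closure of A ∩ F1 w.r.t. T1
  have hcl : ∀ a ∈ A ∩ F1, ∀ b, G.Adj a b → b ∉ T1 → b ∈ A ∩ F1 := by
    rintro a ⟨haA, haF1⟩ b hab hbT1
    have hbS : b ∉ S := by
      intro hbS
      have hbT : b ∉ T := fun hbT => hbT1 (Or.inl (Or.inr ⟨hbS, hbT⟩))
      exact hbT1 (Or.inl (Or.inl ⟨hbS, hF1cl a haF1 b hab hbT⟩))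
    have hbA : b ∈ A := hA.closed a haA b hab hbS
    have hbT : b ∉ T := fun hbT => hbT1 (Or.inr ⟨hbA, hbT⟩)
    exact ⟨hbA, hF1cl a haF1 b hab hbT⟩
  have hT1sub : T1 ⊆ S ∪ T := by
    rintro z ((⟨h, -⟩ | ⟨h, -⟩) | ⟨-, h⟩) <;> simp [h]
  have hxT1 : x ∉ T1 := by
    intro hx
    rcases hT1sub hx with h | h
    · exact (hA.disjS.le_bot ⟨hxA, h⟩)
    · exact (h1T.le_bot ⟨hxF1, h⟩)
  have hwT1 : w ∉ T1 := by
    intro hw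
    rcases hT1sub hw with h | h
    · rcases hw with (⟨-, hq⟩ | ⟨-, hq⟩) | ⟨hq, -⟩
      · exact h12.le_bot ⟨hq, hwF2⟩
      · exact h2T.le_bot ⟨hwF2, hq⟩
      · exact hA.disjS.le_bot ⟨hq, h⟩
    · exact h2T.le_bot ⟨hwF2, h⟩
  have hwX : w ∉ A ∩ F1 := fun h => h12.le_bot ⟨h.2, hwF2⟩
  have hSepT1 : Sep G T1 := sep_of_closed hcl ⟨hxA, hxF1⟩ hxT1 hwX hwT1
  -- strict inequality κ < |T1|
  have hstrict : κ < T1.ncard := by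
    rcases lt_or_ge (2 : ℕ) T1.ncard with h | h
    · omega
    · have hge : κ ≤ T1.ncard := hsepmin T1 hSepT1 h
      rcases Nat.lt_or_ge κ T1.ncard with h' | h'
      · exact h'
      · exfalso
        have hT1card : T1.ncard = κ := le_antisymm h' hge
        have hsub : comp G T1 x ⊆ A ∩ F1 := comp_subset_closed hcl ⟨hxA, hxF1⟩
        have hfr : Frag G κ (comp G T1 x) T1 :=
          ⟨hT1card, ⟨x, hxT1, rfl⟩, w, hwT1, fun hc => hwX (hsub hc)⟩
        have h1 : m ≤ (comp G T1 x).ncard := hfragmin _ _ hfr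
        have h2 : (comp G T1 x).ncard ≤ (A ∩ F1).ncard :=
          Set.ncard_le_ncard hsub (Set.toFinite _)
        have h3 : (A ∩ F1).ncard < A.ncard := by
          apply Set.ncard_lt_ncard _ (Set.toFinite _)
          exact ⟨Set.inter_subset_left, fun hsub' =>
            (h1T.le_bot ⟨(hsub' ha'A).2, ha'T⟩)⟩
        omega
  -- counting
  have hT1le : T1.ncard ≤ (S ∩ F1).ncard + (S ∩ T).ncard + (A ∩ T).ncard :=
    le_trans (Set.ncard_union_le _ _) (by
      have := Set.ncard_union_le (S ∩ F1) (S ∩ T)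
      omega)
  have hSdec : κ = (S ∩ F1).ncard + (S ∩ F2).ncard + (S ∩ T).ncard := by
    rw [← hA.cardS]; exact tripart hcover h12 h1T h2T S
  have hTdec : κ = (T ∩ A).ncard + (T ∩ (A ∪ S)ᶜ).ncard + (T ∩ S).ncard := by
    rw [← hT]; exact tripart hA.copart hA.codisj1 hA.disjS.symm.symm
      (hA.codisj2) T
  have hc1 : (T ∩ S).ncard = (S ∩ T).ncard := by rw [Set.inter_comm]
  have hc2 : (T ∩ A).ncard = (A ∩ T).ncard := by rw [Set.inter_comm]
  have ha'mem : 0 < (A ∩ T).ncard :=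
    (Set.ncard_pos (Set.toFinite _)).mpr ⟨a', ha'A, ha'T⟩
  omega

/-- Step 2 of the crossing argument. -/
lemma step2
    (hκ : κ ≤ 2)
    (hsepmin : ∀ T : Set V, Sep G T → T.ncard ≤ 2 → κ ≤ T.ncard)
    (hA : Frag G κ A S)
    (hT : T.ncard = κ)
    (hcover : F1 ∪ F2 ∪ T = Set.univ)
    (h12 : Disjoint F1 F2) (h1T : Disjoint F1 T) (h2T : Disjoint F2 T)
    (hF2cl : ∀ a ∈ F2, ∀ b, G.Adj a b → b ∉ T → b ∈ F2)
    (hne1 : (A ∩ F1).Nonempty)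
    (hlt : (T ∩ (A ∪ S)ᶜ).ncard < (S ∩ F1).ncard) :
    (A ∪ S)ᶜ ∩ F2 = ∅ := by
  by_contra hne
  obtain ⟨z, hzB, hzF2⟩ := Set.nonempty_iff_ne_empty.mpr hne
  obtain ⟨x, hxA, hxF1⟩ := hne1
  set B : Set V := (A ∪ S)ᶜ with hBdef
  set T2 : Set V := (S ∩ F2) ∪ (S ∩ T) ∪ (B ∩ T) with hT2def
  have hcl : ∀ a ∈ B ∩ F2, ∀ b, G.Adj a b → b ∉ T2 → b ∈ B ∩ F2 := by
    rintro a ⟨haB, haF2⟩ b hab hbT2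
    have hbS : b ∉ S := by
      intro hbS
      have hbT : b ∉ T := fun hbT => hbT2 (Or.inl (Or.inr ⟨hbS, hbT⟩))
      exact hbT2 (Or.inl (Or.inl ⟨hbS, hF2cl a haF2 b hab hbT⟩))
    have hbB : b ∈ B := hA.co_closed a haB b hab hbS
    have hbT : b ∉ T := fun hbT => hbT2 (Or.inr ⟨hbB, hbT⟩)
    exact ⟨hbB, hF2cl a haF2 b hab hbT⟩
  have hT2sub : T2 ⊆ S ∪ T := by
    rintro u ((⟨h, -⟩ | ⟨h, -⟩) | ⟨-, h⟩) <;> simp [h]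
  have hzT2 : z ∉ T2 := by
    intro hz
    rcases hT2sub hz with h | h
    · exact hzB (Or.inr h)
    · exact h2T.le_bot ⟨hzF2, h⟩
  have hxT2 : x ∉ T2 := by
    intro hx
    rcases hT2sub hx with h | h
    · exact hA.disjS.le_bot ⟨hxA, h⟩
    · exact h1T.le_bot ⟨hxF1, h⟩
  have hxX : x ∉ B ∩ F2 := fun h => h.1 (Or.inl hxA)
  have hSepT2 : Sep G T2 := sep_of_closed hcl ⟨hzB, hzF2⟩ hzT2 hxX hxT2
  have hT2le : T2.ncard ≤ (S ∩ F2).ncard + (S ∩ T).ncard + (B ∩ T).ncard :=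
    le_trans (Set.ncard_union_le _ _) (by
      have := Set.ncard_union_le (S ∩ F2) (S ∩ T)
      omega)
  have hSdec : κ = (S ∩ F1).ncard + (S ∩ F2).ncard + (S ∩ T).ncard := by
    rw [← hA.cardS]; exact tripart hcover h12 h1T h2T S
  have hc1 : (B ∩ T).ncard = (T ∩ B).ncard := by rw [Set.inter_comm]
  have hT2lt : T2.ncard < κ := by omega
  have := hsepmin T2 hSepT2 (by omega)
  omega

end Cross



section CrossMain

variable {κ m : ℕ} {A F1 F2 : Set V}

lemma cross
    (hκ : κ ≤ 2)
    (hsepmin : ∀ T : Set V, Sep G T → T.ncard ≤ 2 → κ ≤ T.ncard)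
    (hfragmin : ∀ F S : Set V, Frag G κ F S → m ≤ F.ncard)
    (hm2 : 2 ≤ m)
    (hA : Frag G κ A S) (hAm : A.ncard = m)
    (hT : T.ncard = κ)
    (hcover : F1 ∪ F2 ∪ T = Set.univ)
    (h12 : Disjoint F1 F2) (h1T : Disjoint F1 T) (h2T : Disjoint F2 T)
    (hF1ne : F1.Nonempty) (hF2ne : F2.Nonempty)
    (hF1cl : ∀ a ∈ F1, ∀ b, G.Adj a b → b ∉ T → b ∈ F1)
    (hF2cl : ∀ a ∈ F2, ∀ b, G.Adj a b → b ∉ T → b ∈ F2)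
    (haT : (A ∩ T).Nonempty) :
    A ∩ F1 = ∅ := by
  by_contra hne
  have hne1 : (A ∩ F1).Nonempty := Set.nonempty_iff_ne_empty.mpr hne
  have hcover' : F2 ∪ F1 ∪ T = Set.univ := by rwa [Set.union_comm F2 F1]
  have s1 : (T ∩ (A ∪ S)ᶜ).ncard < (S ∩ F1).ncard :=
    step1 hκ hsepmin hfragmin hA hAm hT hcover h12 h1T h2T hF2ne hF1cl hne1 haT
  have s2 : (A ∪ S)ᶜ ∩ F2 = ∅ :=
    step2 hκ hsepmin hA hT hcover h12 h1T h2T hF2cl hne1 s1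
  by_cases hA2 : (A ∩ F2).Nonempty
  · -- both corners occupied: B ⊆ T, contradiction
    have s1' : (T ∩ (A ∪ S)ᶜ).ncard < (S ∩ F2).ncard :=
      step1 hκ hsepmin hfragmin hA hAm hT hcover' h12.symm h2T h1T hF1ne hF2cl hA2 haT
    have s2' : (A ∪ S)ᶜ ∩ F1 = ∅ :=
      step2 hκ hsepmin hA hT hcover' h12.symm h2T h1T hF1cl hA2 s1'
    -- B ⊆ T
    have hBT : (A ∪ S)ᶜ ⊆ T := by
      intro z hz
      have h1 : z ∉ F1 := fun h => (Set.eq_empty_iff_forall_notMem.mp s2' z) ⟨hz, h⟩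
      have h2 : z ∉ F2 := fun h => (Set.eq_empty_iff_forall_notMem.mp s2 z) ⟨hz, h⟩
      have := Set.mem_univ z
      rw [← hcover] at this
      rcases this with (h | h) | h
      · exact absurd h h1
      · exact absurd h h2
      · exact h
    have hBeq : T ∩ (A ∪ S)ᶜ = (A ∪ S)ᶜ :=
      Set.inter_eq_right.mpr hBT
    have hTdec : κ = (T ∩ A).ncard + (T ∩ (A ∪ S)ᶜ).ncard + (T ∩ S).ncard := by
      rw [← hT]; exact tripart hA.copart hA.codisj1 hA.disjS.symm.symm hA.codisj2 T
    have haTcard : 0 < (T ∩ A).ncard :=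
      (Set.ncard_pos (Set.toFinite _)).mpr (by
        obtain ⟨a', h1, h2⟩ := haT; exact ⟨a', h2, h1⟩)
    have hBcard : ((A ∪ S)ᶜ : Set V).ncard ≤ κ - 1 := by
      rw [← hBeq]; omega
    -- but B contains a fragment of size ≥ m ≥ 2
    obtain ⟨w, hwS, hwA⟩ := hA.2.2
    have hwB : w ∈ (A ∪ S)ᶜ := fun h => h.elim hwA hwS
    have hsub : comp G S w ⊆ (A ∪ S)ᶜ := comp_subset_closed hA.co_closed hwB
    obtain ⟨x', hx'⟩ := hA.nonempty
    have hfr : Frag G κ (comp G S w) S :=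
      ⟨hA.cardS, ⟨w, hwS, rfl⟩, x', Set.disjoint_left.mp hA.disjS hx',
        fun hc => (hsub hc) (Or.inl hx')⟩
    have := hfragmin _ _ hfr
    have := Set.ncard_le_ncard hsub (Set.toFinite _)
    omega
  · -- A ∩ F2 = ∅: F2 ⊆ S, contradiction with s1
    have hAF2 : A ∩ F2 = ∅ := Set.not_nonempty_iff_eq_empty.mp hA2
    have hF2S : F2 ⊆ S := by
      intro z hz
      have h1 : z ∉ A := fun h => (Set.eq_empty_iff_forall_notMem.mp hAF2 z) ⟨h, hz⟩
      have h2 : z ∉ (A ∪ S)ᶜ := fun h => (Set.eq_empty_iff_forall_notMem.mp s2 z) ⟨h, hz⟩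
      by_contra h3
      exact h2 (fun hc => hc.elim h1 h3)
    obtain ⟨u, hu⟩ := hF2ne
    have huT : u ∉ T := Set.disjoint_left.mp h2T hu
    have hsub : comp G T u ⊆ F2 := comp_subset_closed hF2cl hu
    obtain ⟨x, hxA, hxF1⟩ := hne1
    have hfr : Frag G κ (comp G T u) T :=
      ⟨hT, ⟨u, huT, rfl⟩, x, Set.disjoint_left.mp h1T hxF1,
        fun hc => Set.disjoint_left.mp h12 hxF1 (hsub hc)⟩
    have hm1 := hfragmin _ _ hfr
    have hm2' := Set.ncard_le_ncard hsub (Set.toFinite _)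
    have hm3 := Set.ncard_le_ncard hF2S (Set.toFinite _)
    rw [hA.cardS] at hm3
    -- m ≤ |F2| ≤ κ ≤ 2 ≤ m, so F2 = S
    have hF2card : F2.ncard = S.ncard := by rw [hA.cardS]; omega
    have hF2eq : F2 = S := Set.eq_of_subset_of_ncard_le hF2S (le_of_eq hF2card.symm)
      (Set.toFinite _)
    have : S ∩ F1 = ∅ := by
      rw [← hF2eq, Set.inter_comm]
      exact Set.disjoint_iff_inter_eq_empty.mp h12
    rw [this, Set.ncard_empty] at s1
    omega

lemma atom_subset
    (hκ : κ ≤ 2)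
    (hsepmin : ∀ T : Set V, Sep G T → T.ncard ≤ 2 → κ ≤ T.ncard)
    (hfragmin : ∀ F S : Set V, Frag G κ F S → m ≤ F.ncard)
    (hm2 : 2 ≤ m)
    (hA : Frag G κ A S) (hAm : A.ncard = m)
    (hTsep : Sep G T) (hTc : T.ncard = κ)
    (haT : (A ∩ T).Nonempty) :
    A ⊆ T := by
  obtain ⟨x, y, hx, hy, hr⟩ := hTsep
  set F1 : Set V := comp G T x with hF1def
  set F2 : Set V := {z | z ∉ T ∧ z ∉ F1} with hF2def
  have hF1T : ∀ z ∈ F1, z ∉ T := fun z hz => hz.1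
  have hcover : F1 ∪ F2 ∪ T = Set.univ := by
    ext z
    simp only [Set.mem_union, Set.mem_univ, iff_true, hF2def, Set.mem_setOf_eq]
    by_cases h1 : z ∈ T
    · tauto
    · by_cases h2 : z ∈ F1 <;> tauto
  have h12 : Disjoint F1 F2 := Set.disjoint_left.mpr fun a ha hb => hb.2 ha
  have h1T : Disjoint F1 T := Set.disjoint_left.mpr fun a ha => ha.1
  have h2T : Disjoint F2 T := Set.disjoint_left.mpr fun a ha => ha.1
  have hF1ne : F1.Nonempty := ⟨x, mem_comp_self hx⟩
  have hF2ne : F2.Nonempty := ⟨y, hy, fun hc => hr hc.2⟩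
  have hF1cl : ∀ a ∈ F1, ∀ b, G.Adj a b → b ∉ T → b ∈ F1 :=
    fun a ha b hab hb => comp_closed ha hab hb
  have hF2cl : ∀ a ∈ F2, ∀ b, G.Adj a b → b ∉ T → b ∈ F2 := by
    rintro a ⟨haT', haF1⟩ b hab hb
    refine ⟨hb, fun hbF1 => haF1 (comp_closed hbF1 hab.symm haT')⟩
  have hc1 : A ∩ F1 = ∅ := cross hκ hsepmin hfragmin hm2 hA hAm hTc hcover
    h12 h1T h2T hF1ne hF2ne hF1cl hF2cl haT
  have hcover' : F2 ∪ F1 ∪ T = Set.univ := by rwa [Set.union_comm F2 F1]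
  have hc2 : A ∩ F2 = ∅ := cross hκ hsepmin hfragmin hm2 hA hAm hTc hcover'
    h12.symm h2T h1T hF2ne hF1ne hF2cl hF1cl haT
  intro z hz
  have := Set.mem_univ z
  rw [← hcover] at this
  rcases this with (h | h) | h
  · exact absurd ⟨hz, h⟩ (Set.eq_empty_iff_forall_notMem.mp hc1 z)
  · exact absurd ⟨hz, h⟩ (Set.eq_empty_iff_forall_notMem.mp hc2 z)
  · exact h

end CrossMain

lemma ncard_neighborSet_map (φ : G ≃g G) (v : V) :
    (G.neighborSet (φ v)).ncard = (G.neighborSet v).ncard := by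
  rw [← Nat.card_coe_set_eq, ← Nat.card_coe_set_eq]
  exact Nat.card_congr (φ.mapNeighborSet v).symm

lemma ROut.image (φ : G ≃g G) (h : ROut G S x y) :
    ROut G (φ.toEquiv '' S) (φ x) (φ y) := by
  obtain ⟨p, hp⟩ := h
  refine ⟨p.map φ.toHom, fun z hz => ?_⟩
  rw [Walk.support_map, List.mem_map] at hz
  obtain ⟨w, hw, rfl⟩ := hz
  intro ⟨w', hw', hww'⟩
  exact hp w hw (by rwa [← φ.toEquiv.injective hww'])

lemma ROut.image_iff (φ : G ≃g G) :
    ROut G (φ.toEquiv '' S) (φ x) (φ y) ↔ ROut G S x y := by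
  refine ⟨fun h => ?_, fun h => h.image φ⟩
  have h2 := h.image φ.symm
  have e1 : φ.symm (φ x) = x := φ.toEquiv.symm_apply_apply x
  have e2 : φ.symm (φ y) = y := φ.toEquiv.symm_apply_apply y
  have e3 : φ.symm.toEquiv '' (φ.toEquiv '' S) = S := by
    rw [← Set.image_comp]
    simp
  rwa [e1, e2, e3] at h2

lemma mem_image_iff (φ : G ≃g G) : φ x ∈ φ.toEquiv '' S ↔ x ∈ S := by
  constructor
  · rintro ⟨w, hw, hww⟩; rwa [← φ.toEquiv.injective hww]
  · exact fun h => ⟨x, h, rfl⟩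

lemma comp_image (φ : G ≃g G) :
    comp G (φ.toEquiv '' S) (φ x) = φ.toEquiv '' comp G S x := by
  ext w
  constructor
  · rintro ⟨hw, hr⟩
    refine ⟨φ.symm w, ?_, φ.toEquiv.apply_symm_apply w⟩
    have : w = φ (φ.symm w) := (φ.toEquiv.apply_symm_apply w).symm
    rw [this] at hw hr
    exact ⟨fun hmem => hw ((mem_image_iff φ).mpr hmem), (ROut.image_iff φ).mp hr⟩
  · rintro ⟨u, ⟨hu, hr⟩, rfl⟩
    exact ⟨fun hmem => hu ((mem_image_iff φ).mp hmem), (ROut.image_iff φ).mpr hr⟩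

lemma Frag.sep {κ : ℕ} {F : Set V} (h : Frag G κ F S) : Sep G S := by
  obtain ⟨hc, ⟨x, hx, rfl⟩, w, hwS, hwF⟩ := h
  exact ⟨x, w, hx, hwS, fun hr => hwF ⟨hwS, hr⟩⟩

lemma Frag.image {κ : ℕ} {F : Set V} (φ : G ≃g G) (h : Frag G κ F S) :
    Frag G κ (φ.toEquiv '' F) (φ.toEquiv '' S) := by
  obtain ⟨hc, ⟨x, hx, rfl⟩, w, hwS, hwF⟩ := h
  refine ⟨by rw [Set.ncard_image_of_injective _ φ.toEquiv.injective]; exact hc,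
    ⟨φ x, fun hm => hx ((mem_image_iff φ).mp hm), (comp_image φ).symm⟩,
    φ w, fun hm => hwS ((mem_image_iff φ).mp hm),
    fun hm => hwF ((mem_image_iff φ).mp hm)⟩

theorem no_small_sep (hconn : G.Connected)
    (hvt : ∀ u v : V, ∃ φ : G ≃g G, φ u = v)
    (hdeg : ∀ v : V, 3 ≤ (G.neighborSet v).ncard) :
    ∀ S : Set V, S.ncard ≤ 2 → ¬ Sep G S := by
  by_contra hcon
  push_neg at hcon
  obtain ⟨S0, hS0card, hS0sep⟩ := hcon
  set K : Set ℕ := {n | n ≤ 2 ∧ ∃ T : Set V, T.ncard = n ∧ Sep G T} with hKdef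
  have hKne : S0.ncard ∈ K := ⟨hS0card, S0, rfl, hS0sep⟩
  set κ : ℕ := sInf K with hκdef
  have hκmem : κ ∈ K := Nat.sInf_mem ⟨_, hKne⟩
  have hκ2 : κ ≤ 2 := hκmem.1
  have hsepmin : ∀ T : Set V, Sep G T → T.ncard ≤ 2 → κ ≤ T.ncard :=
    fun T h1 h2 => Nat.sInf_le ⟨h2, T, rfl, h1⟩
  have hκ1 : 1 ≤ κ := by
    by_contra hκ0
    obtain ⟨T, hTc, x', y', hx', hy', hr⟩ := hκmem.2
    have hT0 : T = ∅ := (Set.ncard_eq_zero (Set.toFinite T)).mp (by omega)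
    obtain ⟨p⟩ := hconn.preconnected x' y'
    exact hr ⟨p, fun z hz => by simp [hT0]⟩
  obtain ⟨T0, hT0c, hT0sep⟩ := hκmem.2
  set M : Set ℕ := {n | ∃ F S' : Set V, Frag G κ F S' ∧ F.ncard = n} with hMdef
  have hMne : ∃ n, n ∈ M := by
    obtain ⟨x', y', hx', hy', hr⟩ := hT0sep
    exact ⟨_, comp G T0 x', T0, ⟨hT0c, ⟨x', hx', rfl⟩, y', hy',
      fun hc => hr hc.2⟩, rfl⟩
  set m : ℕ := sInf M with hmdef
  obtain ⟨A, S, hA, hAm⟩ := Nat.sInf_mem hMne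
  rw [← hmdef] at hAm
  have hfragmin : ∀ F S' : Set V, Frag G κ F S' → m ≤ F.ncard :=
    fun F S' h => Nat.sInf_le ⟨F, S', h, rfl⟩
  -- m ≥ 2
  have hm2 : 2 ≤ m := by
    obtain ⟨x, hxS, hFx⟩ := hA.2.1
    have hxA : x ∈ A := hFx ▸ mem_comp_self hxS
    have hsub : G.neighborSet x ⊆ (A \ {x}) ∪ S := by
      intro n hn
      by_cases hnS : n ∈ S
      · exact Or.inr hnS
      · exact Or.inl ⟨hA.closed x hxA n hn hnS, fun he => G.irrefl (he ▸ hn)⟩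
    have h1 : (G.neighborSet x).ncard ≤ (A \ {x}).ncard + S.ncard :=
      le_trans (Set.ncard_le_ncard hsub (Set.toFinite _)) (Set.ncard_union_le _ _)
    have h2 : (A \ {x}).ncard = A.ncard - 1 := Set.ncard_diff_singleton_of_mem hxA
    have h3 : 1 ≤ A.ncard := (Set.ncard_pos (Set.toFinite _)).mpr ⟨x, hxA⟩
    have h4 : S.ncard = κ := hA.cardS
    have h5 := hdeg x
    omega
  -- Endgame
  obtain ⟨x0, hx0A⟩ := hA.nonempty
  have hSne : S.Nonempty := (Set.ncard_pos (Set.toFinite _)).mp (by rw [hA.cardS]; omega)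
  obtain ⟨a', ha'S⟩ := hSne
  obtain ⟨φ, hφ⟩ := hvt x0 a'
  set A2 : Set V := φ.toEquiv '' A with hA2def
  set S2 : Set V := φ.toEquiv '' S with hS2def
  have hA2frag : Frag G κ A2 S2 := hA.image φ
  have hA2m : A2.ncard = m := by
    rw [hA2def, Set.ncard_image_of_injective _ φ.toEquiv.injective]; exact hAm
  have ha'A2 : a' ∈ A2 := ⟨x0, hx0A, hφ⟩
  have hA2sub : A2 ⊆ S := atom_subset hκ2 hsepmin hfragmin hm2 hA2frag hA2m
    hA.sep (hA.cardS) ⟨a', ha'A2, ha'S⟩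
  have hmκ : m ≤ κ := by
    have := Set.ncard_le_ncard hA2sub (Set.toFinite _)
    rw [hA.cardS] at this; omega
  have hm_eq : m = 2 := le_antisymm (le_trans hmκ hκ2) hm2
  have hκ_eq : κ = 2 := by omega
  have hA2eq : A2 = S := Set.eq_of_subset_of_ncard_le hA2sub
    (by rw [hA.cardS, hA2m]; omega) (Set.toFinite _)
  -- extract the four vertices
  obtain ⟨x, y, hxy, hAxy⟩ := Set.ncard_eq_two.mp (by rw [hAm, hm_eq] : A.ncard = 2)
  obtain ⟨a, b, hab, hSab⟩ := Set.ncard_eq_two.mp (by rw [hA.cardS, hκ_eq] : S.ncard = 2)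
  have hxS : x ∉ S := Set.disjoint_left.mp hA.disjS (hAxy ▸ (by simp) : x ∈ A)
  have hyS : y ∉ S := Set.disjoint_left.mp hA.disjS (hAxy ▸ (by simp) : y ∈ A)
  have hxA : x ∈ A := hAxy ▸ (by simp)
  have hyA : y ∈ A := hAxy ▸ (by simp)
  have haS : a ∈ S := hSab ▸ (by simp)
  have hbS : b ∈ S := hSab ▸ (by simp)
  -- neighborhoods of x and y
  have hNsub : ∀ u v : V, u ∈ A → v ∈ A → u ≠ v → G.neighborSet u ⊆ {v, a, b} := by
    intro u v huA hvA huv n hn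
    by_cases hnS : n ∈ S
    · rw [hSab] at hnS; simpa using Or.inr hnS
    · have : n ∈ A := hA.closed u huA n hn hnS
      rw [hAxy] at this huA hvA
      have hnu : n ≠ u := fun he => G.irrefl (he ▸ hn)
      simp only [Set.mem_insert_iff, Set.mem_singleton_iff] at this huA hvA ⊢
      rcases this with rfl | rfl <;> rcases huA with rfl | rfl <;> tauto
  have hNcard : ∀ (v w1 w2 w3 : V), G.neighborSet v ⊆ {w1, w2, w3} →
      G.neighborSet v = {w1, w2, w3} := by
    intro v w1 w2 w3 hsub
    refine Set.eq_of_subset_of_ncard_le hsub ?_ (Set.toFinite _)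
    have h1 : ({w1, w2, w3} : Set V).ncard ≤ 3 := by
      refine le_trans (Set.ncard_insert_le _ _) ?_
      have := Set.ncard_insert_le w2 ({w3} : Set V)
      simp only [Set.ncard_singleton] at this ⊢
      omega
    exact le_trans h1 (hdeg v)
  have hNx : G.neighborSet x = {y, a, b} := hNcard _ _ _ _ (hNsub x y hxA hyA hxy)
  have hNy : G.neighborSet y = {x, a, b} := hNcard _ _ _ _ (hNsub y x hyA hxA hxy.symm)
  -- x, y ∈ S2
  have hadj_xa : G.Adj x a := by have : a ∈ G.neighborSet x := by rw [hNx]; simp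
                                 exact this
  have hadj_xb : G.Adj x b := by have : b ∈ G.neighborSet x := by rw [hNx]; simp
                                 exact this
  have hadj_ya : G.Adj y a := by have : a ∈ G.neighborSet y := by rw [hNy]; simp
                                 exact this
  have hadj_yb : G.Adj y b := by have : b ∈ G.neighborSet y := by rw [hNy]; simp
                                 exact this
  have hmemS2 : ∀ u : V, u ∈ A → G.Adj a u → u ∈ S2 := by
    intro u huA hadj
    by_contra huS2
    have : u ∈ A2 := hA2frag.closed a (hA2eq ▸ haS) u hadj huS2
    rw [hA2eq] at this
    exact Set.disjoint_left.mp hA.disjS huA this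
  have hxS2 : x ∈ S2 := hmemS2 x hxA hadj_xa.symm
  have hyS2 : y ∈ S2 := hmemS2 y hyA hadj_ya.symm
  have hS2eq : S2 = {x, y} := by
    refine (Set.eq_of_subset_of_ncard_le ?_ ?_ (Set.toFinite _)).symm
    · intro z hz
      simp only [Set.mem_insert_iff, Set.mem_singleton_iff] at hz
      rcases hz with rfl | rfl
      · exact hxS2
      · exact hyS2
    · have h1 : S2.ncard = κ := hA2frag.cardS
      rw [h1, hκ_eq, Set.ncard_pair hxy]
  -- neighborhoods of a and b
  have hNSsub : ∀ u v : V, u ∈ S → v ∈ S → u ≠ v → G.neighborSet u ⊆ {v, x, y} := by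
    intro u v huS hvS huv n hn
    by_cases hnS2 : n ∈ S2
    · rw [hS2eq] at hnS2; simpa using Or.inr hnS2
    · have : n ∈ A2 := hA2frag.closed u (hA2eq ▸ huS) n hn hnS2
      rw [hA2eq, hSab] at this
      rw [hSab] at huS hvS
      have hnu : n ≠ u := fun he => G.irrefl (he ▸ hn)
      simp only [Set.mem_insert_iff, Set.mem_singleton_iff] at this huS hvS ⊢
      rcases this with rfl | rfl <;> rcases huS with rfl | rfl <;> tauto
  have hNa : G.neighborSet a = {b, x, y} := hNcard _ _ _ _ (hNSsub a b haS hbS hab)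
  have hNb : G.neighborSet b = {a, x, y} := hNcard _ _ _ _ (hNSsub b a hbS haS hab.symm)
  -- the closed set {x, y, a, b}
  set X : Set V := {x, y, a, b} with hXdef
  have hXcl : ∀ u ∈ X, ∀ v, G.Adj u v → v ∉ (∅ : Set V) → v ∈ X := by
    intro u hu v hadj hne'
    have hv : v ∈ G.neighborSet u := hadj
    simp only [hXdef, Set.mem_insert_iff, Set.mem_singleton_iff] at hu ⊢
    rcases hu with rfl | rfl | rfl | rfl
    · rw [hNx] at hv
      simp only [Set.mem_insert_iff, Set.mem_singleton_iff] at hv; tauto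
    · rw [hNy] at hv
      simp only [Set.mem_insert_iff, Set.mem_singleton_iff] at hv; tauto
    · rw [hNa] at hv
      simp only [Set.mem_insert_iff, Set.mem_singleton_iff] at hv; tauto
    · rw [hNb] at hv
      simp only [Set.mem_insert_iff, Set.mem_singleton_iff] at hv; tauto
  obtain ⟨w, hwS, hwA⟩ := hA.2.2
  have hwX : w ∉ X := by
    simp only [hXdef, Set.mem_insert_iff, Set.mem_singleton_iff]
    rintro (rfl | rfl | rfl | rfl)
    · exact hwA hxA
    · exact hwA hyA
    · exact hwS haS
    · exact hwS hbS
  obtain ⟨p⟩ := hconn.preconnected x w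
  have : w ∈ X := closed_walk hXcl p (fun z hz => by simp) (by simp [hXdef])
  exact hwX this


section Cycle

lemma pair_eq {s : Set V} (hs : s.ncard = 2) {a b : V} (ha : a ∈ s) (hb : b ∈ s)
    (hab : a ≠ b) : s = {a, b} := by
  refine (Set.eq_of_subset_of_ncard_le ?_ ?_ (Set.toFinite _)).symm
  · intro z hz
    simp only [Set.mem_insert_iff, Set.mem_singleton_iff] at hz
    rcases hz with rfl | rfl
    · exact ha
    · exact hb
  · rw [hs, Set.ncard_pair hab]

theorem cycle_iso (hconn : G.Connected) (hn : 3 ≤ Fintype.card V)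
    (hdeg2 : ∀ v : V, (G.neighborSet v).ncard = 2) :
    Nonempty (G ≃g cycleGraph (Fintype.card V)) := by
  classical
  have hex : ∀ u v : V, ∃ w, G.Adj v w ∧ w ≠ u := by
    intro u v
    obtain ⟨a, b, hab, hN⟩ := Set.ncard_eq_two.mp (hdeg2 v)
    have haN : G.Adj v a := by rw [← mem_neighborSet, hN]; simp
    have hbN : G.Adj v b := by rw [← mem_neighborSet, hN]; simp
    by_cases h : a = u
    · exact ⟨b, hbN, fun hh => hab (h ▸ hh ▸ rfl)⟩
    · exact ⟨a, haN, h⟩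
  set nxt : V → V → V := fun u v => (hex u v).choose with hnxtdef
  have nxt_adj : ∀ u v, G.Adj v (nxt u v) := fun u v => (hex u v).choose_spec.1
  have nxt_ne : ∀ u v, nxt u v ≠ u := fun u v => (hex u v).choose_spec.2
  have hV : Nonempty V := hconn.nonempty
  set v0 : V := Classical.arbitrary V with hv0def
  set F : ℕ → V × V := fun k =>
    Nat.rec (v0, nxt v0 v0) (fun _ p => (p.2, nxt p.1 p.2)) k with hFdef
  set f : ℕ → V := fun k => (F k).1 with hfdef
  have hf2 : ∀ k, f (k + 2) = nxt (f k) (f (k + 1)) := fun k => rfl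
  have hadj : ∀ k, G.Adj (f k) (f (k + 1)) := by
    intro k
    induction k with
    | zero => exact nxt_adj v0 v0
    | succ k ih =>
      rw [hf2]
      exact nxt_adj (f k) (f (k + 1))
  have hne2 : ∀ k, f (k + 2) ≠ f k := by
    intro k
    rw [hf2]
    exact nxt_ne (f k) (f (k + 1))
  have hN : ∀ k, G.neighborSet (f (k + 1)) = {f k, f (k + 2)} := by
    intro k
    exact pair_eq (hdeg2 _) ((hadj k).symm) (hadj (k + 1)) (fun h => hne2 k h.symm)
  have hQex : ∃ k, ∃ j, j < k ∧ f k = f j := by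
    have hni : ¬ Function.Injective (fun i : Fin (Fintype.card V + 1) => f i.val) := by
      intro hinj
      have := Fintype.card_le_of_injective _ hinj
      simp only [Fintype.card_fin] at this
      omega
    obtain ⟨i, j, hfij, hij⟩ := Function.not_injective_iff.mp hni
    rcases Nat.lt_or_ge i.val j.val with h | h
    · exact ⟨j.val, i.val, h, hfij.symm⟩
    · have : j.val < i.val := lt_of_le_of_ne h (fun hh => hij (Fin.ext hh.symm))
      exact ⟨i.val, j.val, this, hfij⟩
  obtain ⟨m, hmspec, hmmin⟩ :
      ∃ m : ℕ, (∃ j, j < m ∧ f m = f j) ∧ ∀ k, k < m → ¬ ∃ j, j < k ∧ f k = f j :=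
    ⟨Nat.find hQex, Nat.find_spec hQex, fun k hk => Nat.find_min hQex hk⟩
  obtain ⟨j0, hj0m, hfm⟩ := hmspec
  have hinj : ∀ j k : ℕ, j < k → k < m → f k ≠ f j := by
    intro j k h1 h2 he
    exact hmmin k h2 ⟨j, h1, he⟩
  have hj0 : j0 = 0 := by
    by_contra hj0ne
    obtain ⟨j', rfl⟩ : ∃ j', j0 = j' + 1 := ⟨j0 - 1, by omega⟩
    have hm1 : m ≠ j' + 2 := by
      intro h
      rw [h] at hfm
      exact (hadj (j' + 1)).ne hfm.symm
    have hm2 : m ≠ j' + 3 := by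
      intro h
      rw [h] at hfm
      exact hne2 (j' + 1) hfm
    have hj02 : j' + 3 < m := by omega
    obtain ⟨m', rfl⟩ : ∃ m', m = m' + 1 := ⟨m - 1, by omega⟩
    have hNm : G.neighborSet (f (m' + 1)) = {f m', f (m' + 2)} := hN m'
    have hNj : G.neighborSet (f (j' + 1)) = {f j', f (j' + 2)} := hN j'
    have hmem : f m' ∈ ({f j', f (j' + 2)} : Set V) := by
      rw [← hNj, ← hfm, hNm]; simp
    rcases hmem with h | h
    · exact hinj j' m' (by omega) (by omega) h
    · exact hinj (j' + 2) m' (by omega) (by omega) h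
  rw [hj0] at hfm
  have hm3 : 3 ≤ m := by
    rcases Nat.lt_or_ge m 3 with h | h
    · interval_cases m
      · omega
      · exact absurd hfm (hadj 0).ne'
      · exact absurd hfm (hne2 0)
    · exact h
  have hNf0 : G.neighborSet (f 0) = {f (m - 1), f (m + 1)} := by
    have h0 := hN (m - 1)
    have e1 : m - 1 + 1 = m := by omega
    have e2 : m - 1 + 2 = m + 1 := by omega
    rw [e1, e2] at h0
    rw [hfm] at h0
    exact h0
  have hfm1 : f (m + 1) = f 1 := by
    have h1 : f 1 ∈ G.neighborSet (f 0) := hadj 0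
    rw [hNf0] at h1
    rcases h1 with h | h
    · exact absurd h.symm (hinj 1 (m - 1) (by omega) (by omega))
    · exact h.symm
  set X : Set V := {v | ∃ k, k < m ∧ f k = v} with hXdef
  have hXcl : ∀ u ∈ X, ∀ w, G.Adj u w → w ∉ (∅ : Set V) → w ∈ X := by
    rintro u ⟨k, hk, rfl⟩ w hadjw hwe
    have hw : w ∈ G.neighborSet (f k) := hadjw
    cases k with
    | zero =>
      rw [hNf0] at hw
      simp only [Set.mem_insert_iff, Set.mem_singleton_iff] at hw
      rcases hw with rfl | rfl
      · exact ⟨m - 1, by omega, rfl⟩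
      · exact ⟨1, by omega, hfm1.symm⟩
    | succ k' =>
      rw [hN k'] at hw
      simp only [Set.mem_insert_iff, Set.mem_singleton_iff] at hw
      rcases hw with rfl | rfl
      · exact ⟨k', by omega, rfl⟩
      · rcases Nat.lt_or_ge (k' + 2) m with h | h
        · exact ⟨k' + 2, h, rfl⟩
        · have he : k' + 2 = m := by omega
          refine ⟨0, by omega, ?_⟩
          rw [← he] at hfm
          exact hfm.symm
  have hXuniv : ∀ w : V, w ∈ X := by
    intro w
    obtain ⟨p⟩ := hconn.preconnected (f 0) w
    exact closed_walk hXcl p (fun z hz => by simp) ⟨0, by omega, rfl⟩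
  have hfeq : ∀ k1 k2 : ℕ, k1 < m → k2 < m → (f k1 = f k2 ↔ k1 = k2) := by
    intro k1 k2 h1 h2
    constructor
    · intro he
      rcases Nat.lt_trichotomy k1 k2 with h | h | h
      · exact absurd he.symm (hinj k1 k2 h h2)
      · exact h
      · exact absurd he (hinj k2 k1 h h1)
    · rintro rfl; rfl
  set g : Fin m → V := fun i => f i.val with hgdef
  have hgbij : Function.Bijective g := by
    constructor
    · intro i j hij
      exact Fin.ext ((hfeq i.val j.val i.isLt j.isLt).mp hij)
    · intro w
      obtain ⟨k, hk, hfk⟩ := hXuniv w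
      exact ⟨⟨k, hk⟩, hfk⟩
  have hmn : m = Fintype.card V := by
    have := Fintype.card_of_bijective hgbij
    simpa using this
  have hchar : ∀ k, k < m → G.neighborSet (f k) = {f ((k + m - 1) % m), f ((k + 1) % m)} := by
    intro k hk
    cases k with
    | zero =>
      have e1 : (0 + m - 1) % m = m - 1 := by
        have h01 : 0 + m - 1 = m - 1 := by omega
        rw [h01]; exact Nat.mod_eq_of_lt (by omega)
      have e2 : (0 + 1) % m = 1 := Nat.mod_eq_of_lt (by omega)
      rw [e1, e2, hNf0, hfm1]
    | succ k' =>
      have e1 : (k' + 1 + m - 1) % m = k' := by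
        have h01 : k' + 1 + m - 1 = m + k' := by omega
        rw [h01, Nat.add_mod_left]; exact Nat.mod_eq_of_lt (by omega)
      by_cases h : k' + 2 = m
      · have e2 : (k' + 1 + 1) % m = 0 := by
          have h02 : k' + 1 + 1 = m := by omega
          rw [h02, Nat.mod_self]
        rw [e1, e2, hN k', show k' + 2 = m from h, hfm]
      · have e2 : (k' + 1 + 1) % m = k' + 2 := by
          have h02 : k' + 1 + 1 = k' + 2 := by omega
          rw [h02]; exact Nat.mod_eq_of_lt (by omega)
        rw [e1, e2, hN k']
  have hadj_iff : ∀ k1 k2 : ℕ, k1 < m → k2 < m →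
      (G.Adj (f k1) (f k2) ↔ k2 = (k1 + m - 1) % m ∨ k2 = (k1 + 1) % m) := by
    intro k1 k2 h1 h2
    have hlt1 : (k1 + m - 1) % m < m := Nat.mod_lt _ (by omega)
    have hlt2 : (k1 + 1) % m < m := Nat.mod_lt _ (by omega)
    constructor
    · intro hadj12
      have hmem : f k2 ∈ G.neighborSet (f k1) := hadj12
      rw [hchar k1 h1] at hmem
      rcases hmem with h | h
      · exact Or.inl ((hfeq k2 _ h2 hlt1).mp h)
      · exact Or.inr ((hfeq k2 _ h2 hlt2).mp h)
    · intro h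
      have hmem : f k2 ∈ G.neighborSet (f k1) := by
        rw [hchar k1 h1]
        rcases h with rfl | rfl
        · exact Or.inl rfl
        · exact Or.inr rfl
      exact hmem
  have harith : ∀ k1 k2 : ℕ, k1 < m → k2 < m →
      (k2 = (k1 + m - 1) % m ↔ k1 = (k2 + 1) % m) := by
    intro k1 k2 h1 h2
    have hmod1 : (k1 + m - 1) % m = if k1 = 0 then m - 1 else k1 - 1 := by
      split_ifs with h
      · subst h
        have h01 : 0 + m - 1 = m - 1 := by omega
        rw [h01]; exact Nat.mod_eq_of_lt (by omega)
      · have e : k1 + m - 1 = m + (k1 - 1) := by omega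
        rw [e, Nat.add_mod_left]; exact Nat.mod_eq_of_lt (by omega)
    have hmod2 : (k2 + 1) % m = if k2 + 1 = m then 0 else k2 + 1 := by
      split_ifs with h
      · rw [h, Nat.mod_self]
      · exact Nat.mod_eq_of_lt (by omega)
    rw [hmod1, hmod2]
    split_ifs with h h' h' <;> omega
  rw [← hmn]
  obtain ⟨n', rfl⟩ : ∃ n', m = n' + 3 := ⟨m - 3, by omega⟩
  refine ⟨RelIso.symm ⟨Equiv.ofBijective g hgbij, ?_⟩⟩
  intro i j
  show G.Adj (g i) (g j) ↔ (cycleGraph (n' + 3)).Adj i j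
  have hcyc : (cycleGraph (n' + 3)).Adj i j ↔ i - j = 1 ∨ j - i = 1 :=
    cycleGraph_adj (n := n' + 1)
  have hfin : ∀ a b : Fin (n' + 3), b - a = 1 ↔ b.val = (a.val + 1) % (n' + 3) := by
    intro a b
    rw [sub_eq_iff_eq_add, Fin.ext_iff, Fin.val_add]
    have h1 : (1 : Fin (n' + 3)).val = 1 := rfl
    rw [h1, Nat.add_comm 1 a.val]
  have hg : G.Adj (g i) (g j) ↔
      j.val = (i.val + (n' + 3) - 1) % (n' + 3) ∨ j.val = (i.val + 1) % (n' + 3) :=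
    hadj_iff i.val j.val i.isLt j.isLt
  rw [hg, hcyc, hfin j i, hfin i j, harith i.val j.val i.isLt j.isLt]

end Cycle


section Small

lemma iso_K1 (h1 : Fintype.card V = 1) (G : SimpleGraph V) :
    Nonempty (G ≃g completeGraph (Fin 1)) := by
  haveI hsub : Subsingleton V := Fintype.card_le_one_iff_subsingleton.mp (le_of_eq h1)
  refine ⟨⟨Fintype.equivFinOfCardEq h1, ?_⟩⟩
  intro a b
  constructor
  · intro hab
    exact absurd (Subsingleton.elim _ _) hab.ne
  · intro hab
    exact absurd (Subsingleton.elim a b ▸ hab) (G.irrefl)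

lemma two_elts (h2 : Fintype.card V = 2) :
    ∀ x y z : V, y ≠ x → z ≠ x → y = z := by
  intro x y z hy hz
  by_contra hne
  have hcard : ({x, y, z} : Finset V).card = 3 := by
    rw [Finset.card_insert_of_notMem (by simp [hy.symm, hz.symm] <;> tauto),
      Finset.card_insert_of_notMem (by simpa using hne), Finset.card_singleton]
  have hle : ({x, y, z} : Finset V).card ≤ 2 := h2 ▸ Finset.card_le_univ _
  omega

lemma iso_K2 (h2 : Fintype.card V = 2) (G : SimpleGraph V) (hconn : G.Connected) :
    Nonempty (G ≃g completeGraph (Fin 2)) := by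
  have hadj : ∀ a b : V, a ≠ b → G.Adj a b := by
    intro a b hab
    obtain ⟨p⟩ := hconn.preconnected a b
    cases p with
    | nil => exact absurd rfl hab
    | @cons _ c _ h q =>
      have : c = b := two_elts h2 a c b h.ne' hab.symm
      exact this ▸ h
  refine ⟨⟨Fintype.equivFinOfCardEq h2, ?_⟩⟩
  intro a b
  constructor
  · intro hab
    have : a ≠ b := fun h => hab.ne (h ▸ rfl)
    exact hadj a b this
  · intro hab
    simp only [completeGraph, top_adj, ne_eq]
    intro h
    exact hab.ne ((Fintype.equivFinOfCardEq h2).injective h)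

lemma deg_one_absurd (hconn : G.Connected) (hn : 3 ≤ Fintype.card V)
    (hdeg : ∀ v : V, (G.neighborSet v).ncard = 1) : False := by
  have hV : Nonempty V := hconn.nonempty
  set v0 : V := Classical.arbitrary V with hv0def
  obtain ⟨w, hw⟩ := Set.ncard_eq_one.mp (hdeg v0)
  have hadj0 : G.Adj v0 w := by rw [← mem_neighborSet, hw]; rfl
  obtain ⟨z, hz⟩ := Set.ncard_eq_one.mp (hdeg w)
  have hv0N : v0 ∈ G.neighborSet w := hadj0.symm
  have hzv0 : z = v0 := by rw [hz] at hv0N; exact hv0N.symm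
  set X : Set V := {v0, w} with hXdef
  have hXcl : ∀ u ∈ X, ∀ b, G.Adj u b → b ∉ (∅ : Set V) → b ∈ X := by
    rintro u hu b hadjb -
    have hb : b ∈ G.neighborSet u := hadjb
    rcases hu with rfl | rfl
    · rw [hw] at hb; exact Or.inr hb
    · rw [hz] at hb; exact Or.inl (hzv0 ▸ hb)
  have hXne : ∃ u, u ∉ X := by
    by_contra hc
    push_neg at hc
    have huniv : X = Set.univ := Set.eq_univ_of_forall hc
    have h1 : X.ncard ≤ 2 := by
      refine le_trans (Set.ncard_insert_le _ _) ?_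
      simp [Set.ncard_singleton]
    rw [huniv, Set.ncard_univ, Nat.card_eq_fintype_card] at h1
    omega
  obtain ⟨u, hu⟩ := hXne
  obtain ⟨p⟩ := hconn.preconnected v0 u
  exact hu (closed_walk hXcl p (fun z hz => by simp) (Or.inl rfl))

end Small

/-- STATEMENT 19 proof body as a standalone theorem over our machinery. -/
theorem main_result (G : SimpleGraph V) (hconn : G.Connected)
    (hvt : ∀ u v : V, ∃ φ : G ≃g G, φ u = v) :
    KConnected 3 G ∨ (∃ n : ℕ, 3 ≤ n ∧ Nonempty (G ≃g cycleGraph n)) ∨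
      Nonempty (G ≃g completeGraph (Fin 2)) ∨
      Nonempty (G ≃g completeGraph (Fin 1)) := by
  classical
  have hV : Nonempty V := hconn.nonempty
  have hc1 : 1 ≤ Fintype.card V := Fintype.card_pos
  by_cases h1 : Fintype.card V = 1
  · exact Or.inr (Or.inr (Or.inr (iso_K1 h1 G)))
  by_cases h2 : Fintype.card V = 2
  · exact Or.inr (Or.inr (Or.inl (iso_K2 h2 G hconn)))
  have h3 : 3 ≤ Fintype.card V := by omega
  have hdeq : ∀ u v : V, (G.neighborSet u).ncard = (G.neighborSet v).ncard := by
    intro u v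
    obtain ⟨φ, hφ⟩ := hvt u v
    rw [← hφ]
    exact (ncard_neighborSet_map φ u).symm
  set v1 : V := Classical.arbitrary V with hv1def
  set d : ℕ := (G.neighborSet v1).ncard with hddef
  have hd_all : ∀ v : V, (G.neighborSet v).ncard = d := fun v => hdeq v v1
  have hd1 : 1 ≤ d := by
    obtain ⟨w, hw⟩ := exists_adj_of_connected hconn (by omega) v1
    have : (G.neighborSet v1).Nonempty := ⟨w, hw⟩
    have := (Set.ncard_pos (Set.toFinite _)).mpr this
    omega
  rcases Nat.lt_or_ge d 3 with hdlt | hdge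
  · interval_cases d
    · exact (deg_one_absurd hconn h3 hd_all).elim
    · exact Or.inr (Or.inl ⟨Fintype.card V, h3, cycle_iso hconn h3 hd_all⟩)
  · left
    have hdeg3 : ∀ v : V, 3 ≤ (G.neighborSet v).ncard := fun v => by rw [hd_all v]; omega
    have hcard4 : 4 ≤ Fintype.card V := by
      have hsub : insert v1 (G.neighborSet v1) ⊆ Set.univ := Set.subset_univ _
      have h4 : (insert v1 (G.neighborSet v1)).ncard = d + 1 := by
        have hnm : v1 ∉ G.neighborSet v1 := fun h => G.irrefl h
        rw [Set.ncard_insert_of_notMem hnm (Set.toFinite _)]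
      have h5 := Set.ncard_le_ncard hsub (Set.toFinite _)
      rw [h4, Set.ncard_univ, Nat.card_eq_fintype_card] at h5
      omega
    constructor
    · rw [Nat.card_eq_fintype_card]; omega
    · intro S hS
      have hSc : Sᶜ.Nonempty := by
        rw [Set.nonempty_compl]
        intro hSu
        rw [hSu, Set.ncard_univ, Nat.card_eq_fintype_card] at hS
        omega
      exact connected_induce_of_not_sep hSc
        (no_small_sep hconn hvt hdeg3 S (by omega))


-- ===== end auxiliary development =====

/-- Every vertex-transitive finite connected graph is 3-connected,
a cycle, a `K₂`, or a `K₁`. -/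
theorem stmt19 (G : SimpleGraph V) (hconn : G.Connected)
    (hvt : ∀ u v : V, ∃ φ : G ≃g G, φ u = v) :
    KConnected 3 G ∨ (∃ n : ℕ, 3 ≤ n ∧ Nonempty (G ≃g cycleGraph n)) ∨
      Nonempty (G ≃g completeGraph (Fin 2)) ∨
      Nonempty (G ≃g completeGraph (Fin 1)) :=
  main_result G hconn hvt

end Paper
end
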